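/- arXiv:2210.09331 — 5 statements merged into one kernel-verified Lean document; each statement's English description precedes it below -/
import Mathlib

section
/- Let (Ω, F, (F_t)_{t∈[0,T]}, Q) be a filtered probability space and let (μ_t)_{t∈[0,T]} be a progressively measurable M_+(E)-valued process with E_Q[sup_{t∈[0,T]} μ_t(E)] < ∞, such that for every φ ∈ D_1 the real-valued process t ↦ ⟨φ, μ_t⟩ + ∫_0^t ⟨φ', μ_s⟩ ds is a Q-martingale on [0,T]. Then for every 0 ≤ τ_1 < τ_2 ≤ T and every weight function w(·; τ_1, τ_2) ∈ C^∞(ℝ), the future price process F(t, τ_1, τ_2) := ∫_E w(t+x; τ_1, τ_2) 1_{(τ_1,τ_2]}(t+x) μ_t(dx), t ∈ [0, τ_1], is a Q-martingale on [0, τ_1]; in particular the futures market satisfies the no-arbitrage condition NAFLVR (Theorem 3.1). -/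
open MeasureTheory Set Filter

noncomputable section

/-- `M₊(E)`: finite non-negative Borel measures on `E = [0,T]`, with the weak topology. -/
abbrev MV (T : ℝ) := MeasureTheory.FiniteMeasure (Set.Icc (0:ℝ) T)

/-- `⟨φ, ν⟩ = ∫_E φ(x) ν(dx)`. -/
def pairF {T : ℝ} (φ : ℝ → ℝ) (ν : MV T) : ℝ :=
  ∫ x, φ (x : ℝ) ∂(ν : Measure (Set.Icc (0:ℝ) T))

/-- `φ ∈ D₁`: (the restriction to `E` of) a smooth function on `ℝ` with `φ'(0) = 0`. -/
def memD1 (φ : ℝ → ℝ) : Prop := ContDiff ℝ (⊤ : ℕ∞) φ ∧ deriv φ 0 = 0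

/-- A real-valued martingale on the time interval `[a,b]` w.r.t. filtration `ℱ` and measure `Q`. -/
def IsMartOn {Ω : Type*} {m0 : MeasurableSpace Ω} (ℱ : MeasureTheory.Filtration ℝ m0)
    (Q : MeasureTheory.Measure Ω) (a b : ℝ) (X : ℝ → Ω → ℝ) : Prop :=
  (∀ t ∈ Set.Icc a b,
      MeasureTheory.Integrable (X t) Q ∧ StronglyMeasurable[ℱ t] (X t)) ∧
  ∀ s t, s ∈ Set.Icc a b → t ∈ Set.Icc a b → s ≤ t → Q[X t | ℱ s] =ᵐ[Q] X s

/-- A real-valued local martingale on `[a,b]`: there are stopping times increasing a.s. to `b`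
such that each stopped process is a martingale on `[a,b]`. -/
def IsLocalMartOn {Ω : Type*} {m0 : MeasurableSpace Ω} (ℱ : MeasureTheory.Filtration ℝ m0)
    (Q : MeasureTheory.Measure Ω) (a b : ℝ) (X : ℝ → Ω → ℝ) : Prop :=
  ∃ τ : ℕ → Ω → ℝ,
    (∀ n, MeasureTheory.IsStoppingTime ℱ (fun ω => ((τ n ω : ℝ) : WithTop ℝ))) ∧
    (∀ᵐ ω ∂Q, Monotone (fun n => τ n ω) ∧
      Filter.Tendsto (fun n => τ n ω) Filter.atTop (nhds b)) ∧
    ∀ n, IsMartOn ℱ Q a b (fun t ω => X (min t (τ n ω)) ω)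

/-- The HJM drift condition: for all `φ ∈ D₁`, `⟨φ, μ_t⟩ + ∫_0^t ⟨φ', μ_s⟩ ds`
is a local martingale on `[0,T]`. -/
def HJMdrift {T : ℝ} {Ω : Type*} {m0 : MeasurableSpace Ω} (ℱ : MeasureTheory.Filtration ℝ m0)
    (Q : MeasureTheory.Measure Ω) (μ : ℝ → Ω → MV T) : Prop :=
  ∀ φ : ℝ → ℝ, memD1 φ →
    IsLocalMartOn ℱ Q 0 T (fun t ω =>
      pairF φ (μ t ω) + ∫ s in (0:ℝ)..t, pairF (deriv φ) (μ s ω))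

/-- A function with `|f y - f x| ≤ C (y-x)²` on `[a,b]` is constant. -/
lemma aux_const_of_sq {f : ℝ → ℝ} {a b C : ℝ} (hab : a ≤ b) (hC : 0 ≤ C)
    (h : ∀ x y, a ≤ x → x ≤ y → y ≤ b → |f y - f x| ≤ C * (y - x) ^ 2) : f b = f a := by
  have key : ∀ n : ℕ, 0 < n → |f b - f a| ≤ C * (b - a) ^ 2 / n := by
    intro n hn
    set δ : ℝ := (b - a) / n with hδ
    have hδ0 : 0 ≤ δ := div_nonneg (by linarith) (Nat.cast_nonneg n)
    set p : ℕ → ℝ := fun i => a + i * δ with hp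
    have hpn : p n = b := by
      have hn' : (n : ℝ) ≠ 0 := Nat.cast_ne_zero.mpr hn.ne'
      simp only [hp, hδ]
      field_simp
      ring
    have hp0 : p 0 = a := by simp [hp]
    have htel : f b - f a = ∑ i ∈ Finset.range n, (f (p (i + 1)) - f (p i)) := by
      rw [Finset.sum_range_sub (fun i => f (p i))]
      rw [hpn, hp0]
    have hbound : ∀ i ∈ Finset.range n, |f (p (i + 1)) - f (p i)| ≤ C * δ ^ 2 := by
      intro i hi
      have hi' : (i : ℝ) + 1 ≤ n := by
        have := Finset.mem_range.mp hi
        exact_mod_cast Nat.succ_le_of_lt this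
      have h1 : a ≤ p i := by
        have : 0 ≤ (i : ℝ) * δ := mul_nonneg (Nat.cast_nonneg i) hδ0
        simp [hp]; linarith
      have h2 : p i ≤ p (i + 1) := by
        simp [hp]
        have : ((i : ℕ) + 1 : ℝ) * δ = i * δ + δ := by push_cast; ring
        push_cast
        nlinarith
      have h3 : p (i + 1) ≤ b := by
        have : ((i : ℝ) + 1) * δ ≤ n * δ := by nlinarith
        have hnδ : (n : ℝ) * δ = b - a := by rw [hδ]; field_simp [Nat.cast_ne_zero.mpr hn.ne']
        simp [hp]; push_cast; nlinarith
      have := h (p i) (p (i + 1)) h1 h2 h3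
      have hdiff : p (i + 1) - p i = δ := by simp [hp]; push_cast; ring
      rwa [hdiff] at this
    calc |f b - f a| = |∑ i ∈ Finset.range n, (f (p (i + 1)) - f (p i))| := by rw [htel]
      _ ≤ ∑ i ∈ Finset.range n, |f (p (i + 1)) - f (p i)| := Finset.abs_sum_le_sum_abs _ _
      _ ≤ ∑ _i ∈ Finset.range n, C * δ ^ 2 := Finset.sum_le_sum hbound
      _ = n * (C * δ ^ 2) := by rw [Finset.sum_const, Finset.card_range]; ring
      _ = C * (b - a) ^ 2 / n := by
          have hn' : (n : ℝ) ≠ 0 := Nat.cast_ne_zero.mpr hn.ne'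
          rw [hδ]
          field_simp
  by_contra hne
  have hpos : 0 < |f b - f a| := abs_pos.mpr (sub_ne_zero.mpr hne)
  obtain ⟨n, hn⟩ := exists_nat_gt (C * (b - a) ^ 2 / |f b - f a|)
  have hn0 : 0 < n := by
    by_contra h0
    push_neg at h0
    interval_cases n
    · simp at hn
      nlinarith [sq_nonneg (b - a), mul_nonneg hC (sq_nonneg (b - a)),
        div_nonneg (mul_nonneg hC (sq_nonneg (b - a))) hpos.le]
  have h1 := key n hn0
  have h2 : C * (b - a) ^ 2 / |f b - f a| < n := hn
  have : C * (b - a) ^ 2 < n * |f b - f a| := by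
    rwa [div_lt_iff₀ hpos] at h2
  have : C * (b - a) ^ 2 / n < |f b - f a| := by
    rw [div_lt_iff₀ (by exact_mod_cast hn0 : (0:ℝ) < n)]
    linarith [this]
  linarith

/-- If a differentiable function vanishes on `Iic c` then its derivative vanishes there too. -/
lemma aux_deriv_zero_on_Iic {f : ℝ → ℝ} (hf : Differentiable ℝ f) {c : ℝ}
    (h0 : ∀ y ≤ c, f y = 0) : ∀ u ≤ c, deriv f u = 0 := by
  intro u hu
  rcases lt_or_eq_of_le hu with hlt | heq
  · have hev : f =ᶠ[nhds u] (fun _ => (0:ℝ)) :=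
      Filter.eventually_of_mem (Iio_mem_nhds hlt) (fun y hy => h0 y (le_of_lt hy))
    rw [hev.deriv_eq]
    simp
  · subst heq
    have hd := (hf u).hasDerivAt
    rw [hasDerivAt_iff_tendsto_slope] at hd
    have h1 : Tendsto (slope f u) (nhdsWithin u (Iio u)) (nhds (deriv f u)) :=
      hd.mono_left (nhdsWithin_mono u fun y hy => ne_of_lt hy)
    have h2 : Tendsto (slope f u) (nhdsWithin u (Iio u)) (nhds 0) := by
      apply Tendsto.congr' _ tendsto_const_nhds
      filter_upwards [self_mem_nhdsWithin] with y hy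
      simp only [slope, vsub_eq_sub, h0 y (le_of_lt hy), h0 u le_rfl, sub_zero, smul_eq_mul,
        mul_zero]
    exact (tendsto_nhds_unique h2 h1).symm

lemma aux_pairF_one {T : ℝ} (ν : MV T) :
    pairF (fun _ => (1:ℝ)) ν = ((ν : Measure (Set.Icc (0:ℝ) T)) Set.univ).toReal := by
  simp [pairF, ← FiniteMeasure.ennreal_coeFn_eq_coeFn_toMeasure]

lemma aux_pairF_one_nonneg {T : ℝ} (ν : MV T) : 0 ≤ pairF (fun _ => (1:ℝ)) ν := by
  rw [aux_pairF_one]; positivity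

lemma aux_abs_pairF_le {T : ℝ} {ψ : ℝ → ℝ} {C : ℝ}
    (hC : ∀ x ∈ Set.Icc (0:ℝ) T, |ψ x| ≤ C) (ν : MV T) :
    |pairF ψ ν| ≤ C * pairF (fun _ => (1:ℝ)) ν := by
  rw [aux_pairF_one]
  have h := norm_integral_le_of_norm_le_const (μ := (ν : Measure (Set.Icc (0:ℝ) T)))
    (f := fun x : Set.Icc (0:ℝ) T => ψ (x : ℝ)) (C := C)
    (Filter.Eventually.of_forall fun x => by
      simpa [Real.norm_eq_abs] using hC (x : ℝ) x.2)
  simpa [pairF, Real.norm_eq_abs, ← FiniteMeasure.ennreal_coeFn_eq_coeFn_toMeasure] using h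

lemma aux_integrable_pairF_inner {T : ℝ} {ψ : ℝ → ℝ} (hψ : Measurable ψ) {C : ℝ}
    (hC : ∀ x ∈ Set.Icc (0:ℝ) T, |ψ x| ≤ C) (ν : MV T) :
    Integrable (fun x : Set.Icc (0:ℝ) T => ψ (x : ℝ)) (ν : Measure (Set.Icc (0:ℝ) T)) := by
  refine Integrable.mono' (integrable_const C) ?_ ?_
  · exact (hψ.comp measurable_subtype_coe).aestronglyMeasurable
  · exact Filter.Eventually.of_forall fun x => by
      simpa [Real.norm_eq_abs] using hC (x : ℝ) x.2

/-- Differentiation under the integral sign for `u ↦ ∫ g (u + x) dν`. -/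
lemma aux_hasDerivAt_pairF_shift {T : ℝ} (hT : 0 ≤ T) {g : ℝ → ℝ}
    (hg : ContDiff ℝ (⊤ : ℕ∞) g) (ν : MV T) (u₀ : ℝ) :
    HasDerivAt (fun u => pairF (fun x => g (u + x)) ν)
      (pairF (fun x => deriv g (u₀ + x)) ν) u₀ := by
  obtain ⟨K, hK⟩ := (isCompact_Icc (a := u₀ - 1) (b := u₀ + 1 + T)).exists_bound_of_continuousOn
    (hg.continuous_deriv (by simp)).continuousOn
  obtain ⟨K0, hK0⟩ := (isCompact_Icc (a := u₀ - 1) (b := u₀ + 1 + T)).exists_bound_of_continuousOn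
    hg.continuous.continuousOn
  have harg : ∀ u ∈ Metric.ball u₀ 1, ∀ x : Set.Icc (0:ℝ) T,
      u + (x:ℝ) ∈ Set.Icc (u₀ - 1) (u₀ + 1 + T) := by
    intro u hu x
    rw [Metric.mem_ball, Real.dist_eq] at hu
    have hx := x.2
    have h1 : |u - u₀| < 1 := hu
    have := abs_lt.mp h1
    exact ⟨by cases hx; linarith [x.2.1], by linarith [x.2.2]⟩
  have hmain := hasDerivAt_integral_of_dominated_loc_of_deriv_le
    (μ := (ν : Measure (Set.Icc (0:ℝ) T))) (s := Metric.ball u₀ 1) (x₀ := u₀)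
    (F := fun u (x : Set.Icc (0:ℝ) T) => g (u + (x:ℝ)))
    (F' := fun u (x : Set.Icc (0:ℝ) T) => deriv g (u + (x:ℝ)))
    (bound := fun _ => K) (Metric.ball_mem_nhds u₀ one_pos) ?_ ?_ ?_ ?_ ?_ ?_
  · exact hmain.2
  · exact Filter.Eventually.of_forall fun u =>
      ((hg.continuous.comp (continuous_const.add continuous_id)).comp
        continuous_subtype_val).aestronglyMeasurable
  · refine Integrable.mono' (integrable_const K0) ?_ ?_
    · exact ((hg.continuous.comp (continuous_const.add continuous_id)).comp
        continuous_subtype_val).aestronglyMeasurable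
    · refine Filter.Eventually.of_forall fun x => ?_
      have := hK0 (u₀ + (x:ℝ)) (harg u₀ (Metric.mem_ball_self one_pos) x)
      simpa [Real.norm_eq_abs] using this
  · exact (((hg.continuous_deriv (by simp)).comp (continuous_const.add continuous_id)).comp
      continuous_subtype_val).aestronglyMeasurable
  · refine Filter.Eventually.of_forall fun x => fun u hu => ?_
    exact hK (u + (x:ℝ)) (harg u hu x)
  · exact integrable_const K
  · refine Filter.Eventually.of_forall fun x => fun u _ => ?_
    have hgd : HasDerivAt g (deriv g (u + (x:ℝ))) (u + (x:ℝ)) :=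
      ((hg.differentiable (by simp)) _).hasDerivAt
    have hshift : HasDerivAt (fun v : ℝ => v + (x:ℝ)) 1 u := (hasDerivAt_id u).add_const _
    have := hgd.comp u hshift
    rw [mul_one] at this
    exact this

/-- Smooth approximations to `1_{(τ₁,τ₂]} w`, vanishing on `(-∞, τ₁]`, dominated by `|w|`. -/
lemma aux_approx (τ₁ τ₂ : ℝ) (hτ : τ₁ < τ₂) (w : ℝ → ℝ) (hw : ContDiff ℝ (⊤ : ℕ∞) w) :
    ∃ g : ℕ → ℝ → ℝ, (∀ n, ContDiff ℝ (⊤ : ℕ∞) (g n)) ∧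
      (∀ n, ∀ y ≤ τ₁, g n y = 0) ∧ (∀ n y, |g n y| ≤ |w y|) ∧
      (∀ y, Filter.Tendsto (fun n => g n y) Filter.atTop
        (nhds (Set.indicator (Set.Ioc τ₁ τ₂) w y))) := by
  set χ : ℕ → ℝ → ℝ := fun n y =>
    Real.smoothTransition ((n + 1 : ℝ) * (y - τ₁)) *
      Real.smoothTransition ((n + 1 : ℝ) * (τ₂ + 1 / (n + 1 : ℝ) - y)) with hχ
  refine ⟨fun n y => w y * χ n y, ?_, ?_, ?_, ?_⟩
  · intro n
    refine hw.mul (ContDiff.mul ?_ ?_)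
    · exact Real.smoothTransition.contDiff.comp
        (contDiff_const.mul ((contDiff_id).sub contDiff_const))
    · exact Real.smoothTransition.contDiff.comp
        (contDiff_const.mul ((contDiff_const).sub contDiff_id))
  · intro n y hy
    have h1 : (n + 1 : ℝ) * (y - τ₁) ≤ 0 :=
      mul_nonpos_of_nonneg_of_nonpos (by positivity) (by linarith)
    simp [hχ, Real.smoothTransition.zero_of_nonpos h1]
  · intro n y
    have h1 := Real.smoothTransition.nonneg ((n + 1 : ℝ) * (y - τ₁))
    have h2 := Real.smoothTransition.le_one ((n + 1 : ℝ) * (y - τ₁))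
    have h3 := Real.smoothTransition.nonneg ((n + 1 : ℝ) * (τ₂ + 1 / (n + 1 : ℝ) - y))
    have h4 := Real.smoothTransition.le_one ((n + 1 : ℝ) * (τ₂ + 1 / (n + 1 : ℝ) - y))
    have hab : |χ n y| ≤ 1 := by
      rw [abs_of_nonneg (mul_nonneg h1 h3)]
      exact mul_le_one₀ h2 h3 h4
    calc |w y * χ n y| = |w y| * |χ n y| := abs_mul _ _
      _ ≤ |w y| * 1 := mul_le_mul_of_nonneg_left hab (abs_nonneg _)
      _ = |w y| := mul_one _
  · intro y
    rcases le_or_gt y τ₁ with hy | hy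
    · have : ∀ n : ℕ, w y * χ n y = Set.indicator (Set.Ioc τ₁ τ₂) w y := by
        intro n
        have h1 : (n + 1 : ℝ) * (y - τ₁) ≤ 0 :=
          mul_nonpos_of_nonneg_of_nonpos (by positivity) (by linarith)
        rw [Set.indicator_of_notMem (fun hmem => absurd hmem.1 (not_lt.mpr hy))]
        have hχ0 : χ n y = 0 := by
          rw [hχ]
          simp only
          rw [Real.smoothTransition.zero_of_nonpos h1, zero_mul]
        rw [hχ0, mul_zero]
      simpa [this] using tendsto_const_nhds
    rcases le_or_gt y τ₂ with hy2 | hy2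
    · -- y ∈ (τ₁, τ₂]
      rw [Set.indicator_of_mem (Set.mem_Ioc.mpr ⟨hy, hy2⟩)]
      refine Filter.Tendsto.congr' ?_ tendsto_const_nhds
      obtain ⟨N, hN⟩ := exists_nat_one_div_lt (show 0 < y - τ₁ by linarith)
      rw [Filter.EventuallyEq, Filter.eventually_atTop]
      refine ⟨N, fun n hn => ?_⟩
      have hinv : 1 / (n + 1 : ℝ) ≤ 1 / (N + 1 : ℝ) := by
        apply one_div_le_one_div_of_le (by positivity)
        exact_mod_cast by omega
      have h1 : (1 : ℝ) ≤ (n + 1 : ℝ) * (y - τ₁) := by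
        rw [← div_le_iff₀' (by positivity)]
        calc (1 : ℝ) / (n + 1) ≤ 1 / (N + 1) := hinv
          _ ≤ y - τ₁ := hN.le
      have h2 : (1 : ℝ) ≤ (n + 1 : ℝ) * (τ₂ + 1 / (n + 1 : ℝ) - y) := by
        have : 1 / (n + 1 : ℝ) ≤ τ₂ + 1 / (n + 1 : ℝ) - y := by linarith
        calc (1:ℝ) = (n + 1 : ℝ) * (1 / (n + 1 : ℝ)) := by field_simp
          _ ≤ (n + 1 : ℝ) * (τ₂ + 1 / (n + 1 : ℝ) - y) := by
              apply mul_le_mul_of_nonneg_left this (by positivity)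
      have hχ1 : χ n y = 1 := by
        rw [hχ]
        simp only
        rw [Real.smoothTransition.one_of_one_le h1, Real.smoothTransition.one_of_one_le h2,
          mul_one]
      show w y = w y * χ n y
      rw [hχ1, mul_one]
    · -- y > τ₂
      rw [Set.indicator_of_notMem (fun hmem => absurd hmem.2 (not_le.mpr hy2))]
      refine Filter.Tendsto.congr' ?_ tendsto_const_nhds
      obtain ⟨N, hN⟩ := exists_nat_one_div_lt (show 0 < y - τ₂ by linarith)
      rw [Filter.EventuallyEq, Filter.eventually_atTop]
      refine ⟨N, fun n hn => ?_⟩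
      have hinv : 1 / (n + 1 : ℝ) ≤ 1 / (N + 1 : ℝ) := by
        apply one_div_le_one_div_of_le (by positivity)
        exact_mod_cast by omega
      have h1 : (n + 1 : ℝ) * (τ₂ + 1 / (n + 1 : ℝ) - y) ≤ 0 := by
        apply mul_nonpos_of_nonneg_of_nonpos (by positivity)
        have : 1 / (n + 1 : ℝ) ≤ y - τ₂ := le_trans hinv hN.le
        linarith
      have hχ0 : χ n y = 0 := by
        rw [hχ]
        simp only
        rw [Real.smoothTransition.zero_of_nonpos h1, mul_zero]
      show (0:ℝ) = w y * χ n y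
      rw [hχ0, mul_zero]

/-- **Theorem 3.1.** If `(μ_t)` is an `M₊(E)`-valued progressively measurable process with
`E_Q[sup_t μ_t(E)] < ∞` such that for every `φ ∈ D₁` the process
`⟨φ, μ_t⟩ + ∫_0^t ⟨φ', μ_s⟩ ds` is a `Q`-martingale on `[0,T]`, then for all
`0 ≤ τ₁ < τ₂ ≤ T` and every smooth weight `w`, the future price process
`F(t,τ₁,τ₂) = ∫_E w(t+x) 1_{(τ₁,τ₂]}(t+x) μ_t(dx)` is a `Q`-martingale on `[0,τ₁]`
(whence the market satisfies NAFLVR). -/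
theorem stmt0 {T : ℝ} (hT : 0 < T)
    {Ω : Type*} {m0 : MeasurableSpace Ω} (ℱ : Filtration ℝ m0)
    (Q : Measure Ω) [IsProbabilityMeasure Q]
    (μ : ℝ → Ω → MV T)
    (hprog : ∀ φ : ℝ → ℝ, Measurable φ →
      ProgMeasurable ℱ (fun t ω => pairF φ (μ t ω)))
    (hsup : Integrable (fun ω => ⨆ t : Icc (0:ℝ) T, ((μ (t : ℝ) ω).mass : ℝ)) Q)
    (hHJM : ∀ φ : ℝ → ℝ, memD1 φ →
      IsMartOn ℱ Q 0 T (fun t ω =>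
        pairF φ (μ t ω) + ∫ s in (0:ℝ)..t, pairF (deriv φ) (μ s ω)))
    (τ₁ τ₂ : ℝ) (hτ₁ : 0 ≤ τ₁) (hτ : τ₁ < τ₂) (hτ₂ : τ₂ ≤ T)
    (w : ℝ → ℝ) (hw : ContDiff ℝ (⊤ : ℕ∞) w) :
    IsMartOn ℱ Q 0 τ₁ (fun t ω =>
      pairF (fun x => Set.indicator (Set.Ioc τ₁ τ₂) w (t + x)) (μ t ω)) := by
  classical
  replace hprog : ∀ φ : ℝ → ℝ, Measurable φ →
      IsStronglyProgressive ℱ (fun t ω => pairF φ (μ t ω)) := hprog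
  have hτ₁T : τ₁ ≤ T := le_trans hτ.le hτ₂
  have hT0 : (0:ℝ) ≤ T := hT.le
  -- mass is a martingale
  have hmem1 : memD1 (fun _ : ℝ => (1:ℝ)) := ⟨contDiff_const, by simp⟩
  have hHJM1 := hHJM _ hmem1
  have hsimp1 : (fun (t : ℝ) (ω : Ω) => pairF (fun _ => (1:ℝ)) (μ t ω)
      + ∫ v in (0:ℝ)..t, pairF (deriv fun _ => (1:ℝ)) (μ v ω))
      = fun t ω => pairF (fun _ => (1:ℝ)) (μ t ω) := by
    funext t ω
    have hd : (deriv fun _ : ℝ => (1:ℝ)) = fun _ => (0:ℝ) := by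
      funext y; exact deriv_const y 1
    rw [hd]
    simp [pairF]
  rw [hsimp1] at hHJM1
  have hmassint : ∀ t ∈ Icc (0:ℝ) T,
      Integrable (fun ω => pairF (fun _ => (1:ℝ)) (μ t ω)) Q :=
    fun t ht => (hHJM1.1 t ht).1
  set M₀ : ℝ := ∫ ω, pairF (fun _ => (1:ℝ)) (μ 0 ω) ∂Q with hM₀
  have hM₀nonneg : 0 ≤ M₀ := integral_nonneg fun ω => aux_pairF_one_nonneg _
  have hMconst : ∀ t ∈ Icc (0:ℝ) T,
      ∫ ω, pairF (fun _ => (1:ℝ)) (μ t ω) ∂Q = M₀ := by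
    intro t ht
    have hc := hHJM1.2 0 t ⟨le_rfl, hT0⟩ ht ht.1
    calc ∫ ω, pairF (fun _ => (1:ℝ)) (μ t ω) ∂Q
        = ∫ ω, (Q[(fun ω => pairF (fun _ => (1:ℝ)) (μ t ω))|ℱ 0]) ω ∂Q :=
          (integral_condExp (ℱ.le 0)).symm
      _ = ∫ ω, pairF (fun _ => (1:ℝ)) (μ 0 ω) ∂Q := integral_congr_ae hc
  -- per-time integrability
  have hIntQ : ∀ (ψ : ℝ → ℝ), Measurable ψ → ∀ C : ℝ, (∀ x ∈ Icc (0:ℝ) T, |ψ x| ≤ C) →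
      ∀ t ∈ Icc (0:ℝ) T, Integrable (fun ω => pairF ψ (μ t ω)) Q := by
    intro ψ hm C hC t ht
    refine Integrable.mono' ((hmassint t ht).const_mul C) ?_ ?_
    · exact (((hprog ψ hm).stronglyAdapted t).mono (ℱ.le t)).aestronglyMeasurable
    · exact Eventually.of_forall fun ω => by
        simpa [Real.norm_eq_abs] using aux_abs_pairF_le hC (μ t ω)
  -- joint measurability of the surrogate
  have hjoint : ∀ (ψ : ℝ → ℝ), Measurable ψ →
      StronglyMeasurable (fun p : ℝ × Ω => pairF ψ (μ (min p.1 T) p.2)) := by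
    intro ψ hm
    have h0 := hprog ψ hm T
    have h0' : StronglyMeasurable[Subtype.instMeasurableSpace.prod m0]
        (fun p : Set.Iic T × Ω => pairF ψ (μ (p.1 : ℝ) p.2)) :=
      h0.mono (sup_le_sup le_rfl (MeasurableSpace.comap_mono (ℱ.le T)))
    exact h0'.comp_measurable
      (g := fun p : ℝ × Ω => ((⟨min p.1 T, mem_Iic.mpr (min_le_right _ _)⟩ : Set.Iic T), p.2))
      (((measurable_fst.min measurable_const).subtype_mk).prodMk measurable_snd)
  -- product integrability
  have hprodInt : ∀ (ψ : ℝ → ℝ), Measurable ψ → ∀ C : ℝ, (∀ x ∈ Icc (0:ℝ) T, |ψ x| ≤ C) →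
      ∀ J : Set ℝ, MeasurableSet J → J ⊆ Icc (0:ℝ) T → ∀ A : Set Ω, MeasurableSet A →
      Integrable (fun p : ℝ × Ω => pairF ψ (μ p.1 p.2))
        ((volume.restrict J).prod (Q.restrict A)) := by
    intro ψ hm C hC J hJ hJsub A hA
    have hC0 : 0 ≤ C := le_trans (abs_nonneg _) (hC 0 ⟨le_rfl, hT0⟩)
    haveI : IsFiniteMeasure (volume.restrict J) :=
      ⟨by rw [Measure.restrict_apply_univ]
          exact lt_of_le_of_lt (measure_mono hJsub) measure_Icc_lt_top⟩
    have haeJ : ∀ᵐ p ∂((volume.restrict J).prod (Q.restrict A)), p.1 ∈ J := by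
      rw [ae_iff]
      have hset : {p : ℝ × Ω | ¬ p.1 ∈ J} = (Jᶜ ×ˢ (univ : Set Ω)) := by
        ext p; simp [Set.mem_prod]
      rw [hset, Measure.prod_prod, Measure.restrict_apply hJ.compl]
      simp
    have haemin : (fun p : ℝ × Ω => pairF ψ (μ (min p.1 T) p.2))
        =ᵐ[(volume.restrict J).prod (Q.restrict A)] (fun p => pairF ψ (μ p.1 p.2)) :=
      haeJ.mono fun p hp => by simp only [min_eq_left (hJsub hp).2]
    have hAESM : AEStronglyMeasurable (fun p : ℝ × Ω => pairF ψ (μ p.1 p.2))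
        ((volume.restrict J).prod (Q.restrict A)) :=
      ((hjoint ψ hm).aestronglyMeasurable).congr haemin
    refine (integrable_prod_iff hAESM).2 ⟨?_, ?_⟩
    · filter_upwards [ae_restrict_mem hJ] with v hv
      exact (hIntQ ψ hm C hC v (hJsub hv)).restrict
    · refine Integrable.mono' (integrable_const (C * M₀)) hAESM.norm.integral_prod_right' ?_
      filter_upwards [ae_restrict_mem hJ] with v hv
      have hint : Integrable (fun ω => pairF ψ (μ v ω)) Q := hIntQ ψ hm C hC v (hJsub hv)
      have h1 : ∫ ω, ‖pairF ψ (μ v ω)‖ ∂(Q.restrict A)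
          ≤ ∫ ω, C * pairF (fun _ => (1:ℝ)) (μ v ω) ∂(Q.restrict A) :=
        integral_mono hint.norm.restrict (((hmassint v (hJsub hv)).const_mul C).restrict)
          (fun ω => by simpa [Real.norm_eq_abs] using aux_abs_pairF_le hC (μ v ω))
      have h2 : ∫ ω, C * pairF (fun _ => (1:ℝ)) (μ v ω) ∂(Q.restrict A)
          ≤ ∫ ω, C * pairF (fun _ => (1:ℝ)) (μ v ω) ∂Q :=
        integral_mono_measure Measure.restrict_le_self
          (Eventually.of_forall fun ω => mul_nonneg hC0 (aux_pairF_one_nonneg _))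
          ((hmassint v (hJsub hv)).const_mul C)
      have h3 : ∫ ω, C * pairF (fun _ => (1:ℝ)) (μ v ω) ∂Q = C * M₀ := by
        rw [integral_const_mul, hMconst v (hJsub hv)]
      have h4 : 0 ≤ ∫ ω, ‖pairF ψ (μ v ω)‖ ∂(Q.restrict A) :=
        integral_nonneg fun ω => norm_nonneg _
      rw [Real.norm_eq_abs, abs_of_nonneg h4]
      linarith
  -- uniform bound on set integrals
  have hGB : ∀ (ψ : ℝ → ℝ), Measurable ψ → ∀ C : ℝ, (∀ x ∈ Icc (0:ℝ) T, |ψ x| ≤ C) →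
      ∀ A : Set Ω, ∀ t ∈ Icc (0:ℝ) T,
      |∫ ω in A, pairF ψ (μ t ω) ∂Q| ≤ C * M₀ := by
    intro ψ hm C hC A t ht
    have hC0 : 0 ≤ C := le_trans (abs_nonneg _) (hC 0 ⟨le_rfl, hT0⟩)
    have hint := hIntQ ψ hm C hC t ht
    have h0 : ‖∫ ω in A, pairF ψ (μ t ω) ∂Q‖ ≤ ∫ ω in A, ‖pairF ψ (μ t ω)‖ ∂Q :=
      norm_integral_le_integral_norm _
    rw [Real.norm_eq_abs] at h0
    have h1 : ∫ ω in A, ‖pairF ψ (μ t ω)‖ ∂Q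
        ≤ ∫ ω in A, C * pairF (fun _ => (1:ℝ)) (μ t ω) ∂Q :=
      integral_mono hint.norm.restrict (((hmassint t ht).const_mul C).restrict)
        (fun ω => by simpa [Real.norm_eq_abs] using aux_abs_pairF_le hC (μ t ω))
    have h2 : ∫ ω in A, C * pairF (fun _ => (1:ℝ)) (μ t ω) ∂Q
        ≤ ∫ ω, C * pairF (fun _ => (1:ℝ)) (μ t ω) ∂Q :=
      integral_mono_measure Measure.restrict_le_self
        (Eventually.of_forall fun ω => mul_nonneg hC0 (aux_pairF_one_nonneg _))
        ((hmassint t ht).const_mul C)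
    have h3 : ∫ ω, C * pairF (fun _ => (1:ℝ)) (μ t ω) ∂Q = C * M₀ := by
      rw [integral_const_mul, hMconst t ht]
    linarith
  -- the key set-integral identity from the HJM martingale condition
  have hP3 : ∀ (φ : ℝ → ℝ), memD1 φ → ∀ s r r' : ℝ, 0 ≤ s → s ≤ r → r ≤ r' → r' ≤ T →
      ∀ A : Set Ω, MeasurableSet[ℱ s] A →
      (∫ ω in A, pairF φ (μ r' ω) ∂Q) - (∫ ω in A, pairF φ (μ r ω) ∂Q)
        = - ∫ v in r..r', (∫ ω in A, pairF (deriv φ) (μ v ω) ∂Q) := by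
    intro φ hφ s r r' hs0 hsr hrr' hr'T A hA
    have hφc : Continuous φ := hφ.1.continuous
    have hφ'c : Continuous (deriv φ) := hφ.1.continuous_deriv (by simp)
    obtain ⟨C, hCn⟩ := (isCompact_Icc (a := (0:ℝ)) (b := T)).exists_bound_of_continuousOn
      hφc.continuousOn
    obtain ⟨C', hC'n⟩ := (isCompact_Icc (a := (0:ℝ)) (b := T)).exists_bound_of_continuousOn
      hφ'c.continuousOn
    have hCa : ∀ x ∈ Icc (0:ℝ) T, |φ x| ≤ C := fun x hx => by
      simpa [Real.norm_eq_abs] using hCn x hx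
    have hCa' : ∀ x ∈ Icc (0:ℝ) T, |deriv φ x| ≤ C' := fun x hx => by
      simpa [Real.norm_eq_abs] using hC'n x hx
    have hr0 : 0 ≤ r := le_trans hs0 hsr
    have hrT : r ≤ T := le_trans hrr' hr'T
    have hr'0 : 0 ≤ r' := le_trans hr0 hrr'
    have hAm0 : MeasurableSet A := ℱ.le s A hA
    have hAr : MeasurableSet[ℱ r] A := ℱ.mono hsr A hA
    have hX := hHJM φ hφ
    have hXr' := (hX.1 r' ⟨hr'0, hr'T⟩).1
    have hcond := hX.2 r r' ⟨hr0, hrT⟩ ⟨hr'0, hr'T⟩ hrr'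
    have hAeq : ∫ ω in A, (pairF φ (μ r' ω) + ∫ v in (0:ℝ)..r', pairF (deriv φ) (μ v ω)) ∂Q
        = ∫ ω in A, (pairF φ (μ r ω) + ∫ v in (0:ℝ)..r, pairF (deriv φ) (μ v ω)) ∂Q := by
      rw [← setIntegral_condExp (ℱ.le r) hXr' hAr]
      exact setIntegral_congr_ae hAm0 (hcond.mono fun ω h _ => h)
    have hpair : ∀ t, t ∈ Icc (0:ℝ) T → Integrable (fun ω => pairF φ (μ t ω)) Q :=
      fun t ht => hIntQ φ hφc.measurable C hCa t ht
    have hdrift : ∀ t, t ∈ Icc (0:ℝ) T →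
        Integrable (fun ω => ∫ v in (0:ℝ)..t, pairF (deriv φ) (μ v ω)) Q := by
      intro t ht
      have h1 := ((hX.1 t ht).1).sub (hpair t ht)
      refine h1.congr (Eventually.of_forall fun ω => ?_)
      simp
    rw [integral_add ((hpair r' ⟨hr'0, hr'T⟩).restrict) ((hdrift r' ⟨hr'0, hr'T⟩).restrict),
        integral_add ((hpair r ⟨hr0, hrT⟩).restrict) ((hdrift r ⟨hr0, hrT⟩).restrict)] at hAeq
    have hsec : ∀ᵐ ω ∂(Q.restrict A),
        IntegrableOn (fun v => pairF (deriv φ) (μ v ω)) (Icc (0:ℝ) T) volume :=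
      (hprodInt (deriv φ) hφ'c.measurable C' hCa' (Icc 0 T) measurableSet_Icc subset_rfl
        A hAm0).prod_left_ae
    have hdd : ∀ᵐ ω ∂(Q.restrict A),
        (∫ v in (0:ℝ)..r', pairF (deriv φ) (μ v ω))
          - (∫ v in (0:ℝ)..r, pairF (deriv φ) (μ v ω))
          = ∫ v in r..r', pairF (deriv φ) (μ v ω) := by
      filter_upwards [hsec] with ω hω
      have h1 : IntervalIntegrable (fun v => pairF (deriv φ) (μ v ω)) volume 0 r := by
        rw [intervalIntegrable_iff']
        exact hω.mono_set (by rw [uIcc_of_le hr0]; exact Icc_subset_Icc le_rfl hrT)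
      have h2 : IntervalIntegrable (fun v => pairF (deriv φ) (μ v ω)) volume r r' := by
        rw [intervalIntegrable_iff']
        exact hω.mono_set (by rw [uIcc_of_le hrr']; exact Icc_subset_Icc hr0 hr'T)
      have h3 := intervalIntegral.integral_add_adjacent_intervals h1 h2
      linarith
    have hsub : ∫ ω in A, ((∫ v in (0:ℝ)..r', pairF (deriv φ) (μ v ω))
          - (∫ v in (0:ℝ)..r, pairF (deriv φ) (μ v ω))) ∂Q
        = (∫ ω in A, (∫ v in (0:ℝ)..r', pairF (deriv φ) (μ v ω)) ∂Q)
          - ∫ ω in A, (∫ v in (0:ℝ)..r, pairF (deriv φ) (μ v ω)) ∂Q :=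
      integral_sub ((hdrift r' ⟨hr'0, hr'T⟩).restrict) ((hdrift r ⟨hr0, hrT⟩).restrict)
    have hIoc : Ioc r r' ⊆ Icc (0:ℝ) T :=
      fun v hv => ⟨le_trans hr0 (le_of_lt hv.1), le_trans hv.2 hr'T⟩
    have hswap : ∫ ω in A, (∫ v in Ioc r r', pairF (deriv φ) (μ v ω)) ∂Q
        = ∫ v in Ioc r r', (∫ ω in A, pairF (deriv φ) (μ v ω) ∂Q) :=
      integral_integral_swap ((hprodInt (deriv φ) hφ'c.measurable C' hCa' (Ioc r r')
        measurableSet_Ioc hIoc A hAm0).swap)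
    have hioc : ∀ ω, (∫ v in r..r', pairF (deriv φ) (μ v ω))
        = ∫ v in Ioc r r', pairF (deriv φ) (μ v ω) :=
      fun ω => intervalIntegral.integral_of_le hrr'
    have hfin : ∫ ω in A, (∫ v in r..r', pairF (deriv φ) (μ v ω)) ∂Q
        = ∫ v in r..r', (∫ ω in A, pairF (deriv φ) (μ v ω) ∂Q) := by
      rw [intervalIntegral.integral_of_le hrr']
      rw [show (fun ω => ∫ v in r..r', pairF (deriv φ) (μ v ω))
        = fun ω => ∫ v in Ioc r r', pairF (deriv φ) (μ v ω) from funext hioc] at *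
      · exact hswap
    have hstep : ∫ ω in A, ((∫ v in (0:ℝ)..r', pairF (deriv φ) (μ v ω))
          - (∫ v in (0:ℝ)..r, pairF (deriv φ) (μ v ω))) ∂Q
        = ∫ v in r..r', (∫ ω in A, pairF (deriv φ) (μ v ω) ∂Q) := by
      rw [integral_congr_ae hdd]
      exact hfin
    rw [hsub] at hstep
    linarith
  -- differentiation under the set integral
  have hDer : ∀ A : Set Ω, MeasurableSet A → ∀ tt ∈ Icc (0:ℝ) T, ∀ (g : ℝ → ℝ),
      ContDiff ℝ (⊤ : ℕ∞) g → ∀ u₀ : ℝ,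
      HasDerivAt (fun u => ∫ ω in A, pairF (fun x => g (u + x)) (μ tt ω) ∂Q)
        (∫ ω in A, pairF (fun x => deriv g (u₀ + x)) (μ tt ω) ∂Q) u₀ := by
    intro A hA tt htt g hg u₀
    obtain ⟨K, hKn⟩ := (isCompact_Icc (a := u₀ - 1) (b := u₀ + 1 + T)).exists_bound_of_continuousOn
      (hg.continuous_deriv (by simp)).continuousOn
    obtain ⟨K0, hK0n⟩ :=
      (isCompact_Icc (a := u₀ - 1) (b := u₀ + 1 + T)).exists_bound_of_continuousOn
      hg.continuous.continuousOn
    have harg : ∀ u ∈ Metric.ball u₀ 1, ∀ x ∈ Icc (0:ℝ) T,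
        u + x ∈ Icc (u₀ - 1) (u₀ + 1 + T) := by
      intro u hu x hx
      rw [Metric.mem_ball, Real.dist_eq] at hu
      have := abs_lt.mp hu
      exact ⟨by linarith [hx.1], by linarith [hx.2]⟩
    have hmeas : ∀ u : ℝ, Measurable (fun x => g (u + x)) :=
      fun u => (hg.continuous.comp (continuous_const.add continuous_id)).measurable
    have hmeas' : ∀ u : ℝ, Measurable (fun x => deriv g (u + x)) :=
      fun u => ((hg.continuous_deriv (by simp)).comp (continuous_const.add continuous_id)).measurable
    have hmain := hasDerivAt_integral_of_dominated_loc_of_deriv_le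
      (μ := Q.restrict A) (s := Metric.ball u₀ 1) (x₀ := u₀)
      (F := fun u ω => pairF (fun x => g (u + x)) (μ tt ω))
      (F' := fun u ω => pairF (fun x => deriv g (u + x)) (μ tt ω))
      (bound := fun ω => K * pairF (fun _ => (1:ℝ)) (μ tt ω)) (Metric.ball_mem_nhds u₀ one_pos) ?_ ?_ ?_ ?_ ?_ ?_
    · exact hmain.2
    · exact Eventually.of_forall fun u =>
        ((((hprog _ (hmeas u)).stronglyAdapted tt).mono (ℱ.le tt)).aestronglyMeasurable).restrict
    · refine (hIntQ _ (hmeas u₀) K0 ?_ tt htt).restrict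
      intro x hx
      simpa [Real.norm_eq_abs] using hK0n (u₀ + x) (harg u₀ (Metric.mem_ball_self one_pos) x hx)
    · exact ((((hprog _ (hmeas' u₀)).stronglyAdapted tt).mono (ℱ.le tt)).aestronglyMeasurable).restrict
    · refine Eventually.of_forall fun ω u hu => ?_
      have hb : ∀ x ∈ Icc (0:ℝ) T, |deriv g (u + x)| ≤ K := fun x hx => by
        simpa [Real.norm_eq_abs] using hKn (u + x) (harg u hu x hx)
      simpa [Real.norm_eq_abs] using aux_abs_pairF_le hb (μ tt ω)
    · exact ((hmassint tt htt).const_mul K).restrict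
    · exact Eventually.of_forall fun ω u _ => aux_hasDerivAt_pairF_shift hT0 hg (μ tt ω) u
  -- fundamental theorem of calculus for the shifted set integrals
  have hFTC : ∀ A : Set Ω, MeasurableSet A → ∀ tt ∈ Icc (0:ℝ) T, ∀ (g : ℝ → ℝ),
      ContDiff ℝ (⊤ : ℕ∞) g → ∀ u u' : ℝ,
      (∫ v in u..u', (∫ ω in A, pairF (fun x => deriv g (v + x)) (μ tt ω) ∂Q))
        = (∫ ω in A, pairF (fun x => g (u' + x)) (μ tt ω) ∂Q)
          - ∫ ω in A, pairF (fun x => g (u + x)) (μ tt ω) ∂Q := by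
    intro A hA tt htt g hg u u'
    have hg' : ContDiff ℝ (⊤ : ℕ∞) (deriv g) := (contDiff_infty_iff_deriv.mp hg).2
    have hcont : Continuous (fun v => ∫ ω in A, pairF (fun x => deriv g (v + x)) (μ tt ω) ∂Q) := by
      rw [continuous_iff_continuousAt]
      exact fun v => (hDer A hA tt htt (deriv g) hg' v).continuousAt
    exact intervalIntegral.integral_eq_sub_of_hasDerivAt
      (fun v _ => hDer A hA tt htt g hg v) (hcont.intervalIntegrable u u')
  -- interval integrability of v ↦ ∫_A ⟨ψ, μ_v⟩
  have hGint : ∀ (ψ : ℝ → ℝ), Measurable ψ → ∀ C : ℝ, (∀ x ∈ Icc (0:ℝ) T, |ψ x| ≤ C) →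
      ∀ A : Set Ω, ∀ a b : ℝ, 0 ≤ a → a ≤ b → b ≤ T →
      IntervalIntegrable (fun v => ∫ ω in A, pairF ψ (μ v ω) ∂Q) volume a b := by
    intro ψ hm C hC A a b ha hab hbT
    rw [intervalIntegrable_iff', uIcc_of_le hab]
    haveI : IsFiniteMeasure (volume.restrict (Icc a b)) :=
      ⟨by rw [Measure.restrict_apply_univ]; exact measure_Icc_lt_top⟩
    have hsm : StronglyMeasurable
        (fun v => ∫ ω in A, pairF ψ (μ (min v T) ω) ∂Q) :=
      (hjoint ψ hm).integral_prod_right'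
    have hae : (fun v => ∫ ω in A, pairF ψ (μ (min v T) ω) ∂Q)
        =ᵐ[volume.restrict (Icc a b)] (fun v => ∫ ω in A, pairF ψ (μ v ω) ∂Q) := by
      filter_upwards [ae_restrict_mem measurableSet_Icc] with v hv
      rw [min_eq_left (le_trans hv.2 hbT)]
    refine Integrable.mono' (integrable_const (C * M₀))
      (hsm.aestronglyMeasurable.congr hae) ?_
    filter_upwards [ae_restrict_mem measurableSet_Icc] with v hv
    rw [Real.norm_eq_abs]
    exact hGB ψ hm C hC A v ⟨le_trans ha hv.1, le_trans hv.2 hbT⟩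
  -- the approximating sequence
  obtain ⟨g, hgsm, hgz, hgb, hglim⟩ := aux_approx τ₁ τ₂ hτ w hw
  obtain ⟨Cw, hCwn⟩ := (isCompact_Icc (a := (0:ℝ)) (b := 2*T)).exists_bound_of_continuousOn
    hw.continuous.continuousOn
  have hCw : ∀ y ∈ Icc (0:ℝ) (2*T), |w y| ≤ Cw := fun y hy => by
    simpa [Real.norm_eq_abs] using hCwn y hy
  have hCw0 : 0 ≤ Cw := le_trans (abs_nonneg _) (hCw 0 ⟨le_rfl, by linarith⟩)
  set tgt : ℝ → ℝ := Set.indicator (Set.Ioc τ₁ τ₂) w with htgt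
  have htgtm : ∀ t : ℝ, Measurable (fun x => tgt (t + x)) := fun t =>
    ((hw.continuous.measurable).indicator measurableSet_Ioc).comp
      (measurable_const.add measurable_id)
  have hrange : ∀ t ∈ Icc (0:ℝ) τ₁, ∀ x ∈ Icc (0:ℝ) T, t + x ∈ Icc (0:ℝ) (2*T) := by
    intro t ht x hx
    exact ⟨by linarith [ht.1, hx.1], by linarith [ht.2, hx.2, hτ₁T]⟩
  have htgtb : ∀ t ∈ Icc (0:ℝ) τ₁, ∀ x ∈ Icc (0:ℝ) T, |tgt (t + x)| ≤ Cw := by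
    intro t ht x hx
    by_cases hmem : (t + x) ∈ Set.Ioc τ₁ τ₂
    · rw [htgt, Set.indicator_of_mem hmem]
      exact hCw _ (hrange t ht x hx)
    · rw [htgt, Set.indicator_of_notMem hmem]
      simpa using hCw0
  have hgshift : ∀ n : ℕ, ∀ t ∈ Icc (0:ℝ) τ₁, ∀ x ∈ Icc (0:ℝ) T, |g n (t + x)| ≤ Cw := by
    intro n t ht x hx
    exact le_trans (hgb n (t + x)) (hCw _ (hrange t ht x hx))
  constructor
  · intro t ht
    refine ⟨hIntQ _ (htgtm t) Cw (htgtb t ht) t ⟨ht.1, le_trans ht.2 hτ₁T⟩, ?_⟩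
    exact (hprog _ (htgtm t)).stronglyAdapted t
  · intro s t hs ht hst
    have hsT : s ∈ Icc (0:ℝ) T := ⟨hs.1, le_trans hs.2 hτ₁T⟩
    have htT : t ∈ Icc (0:ℝ) T := ⟨ht.1, le_trans ht.2 hτ₁T⟩
    refine (ae_eq_condExp_of_forall_setIntegral_eq (ℱ.le s)
      (hIntQ _ (htgtm t) Cw (htgtb t ht) t htT)
      (fun A hA _ => (hIntQ _ (htgtm s) Cw (htgtb s hs) s hsT).integrableOn)
      ?_
      (StronglyMeasurable.aestronglyMeasurable ((hprog _ (htgtm s)).stronglyAdapted s))).symm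
    intro A hA _
    have hAm0 : MeasurableSet A := ℱ.le s A hA
    -- the key identity for each approximant
    have hKn : ∀ n : ℕ,
        (∫ ω in A, pairF (fun x => g n (t + x)) (μ t ω) ∂Q)
          = ∫ ω in A, pairF (fun x => g n (s + x)) (μ s ω) ∂Q := by
      intro n
      set G : ℝ → ℝ := g n with hG
      have hGsm : ContDiff ℝ (⊤ : ℕ∞) G := hgsm n
      have hG'sm : ContDiff ℝ (⊤ : ℕ∞) (deriv G) := (contDiff_infty_iff_deriv.mp hGsm).2
      have hGz : ∀ y ≤ τ₁, G y = 0 := hgz n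
      have hG'z : ∀ y ≤ τ₁, deriv G y = 0 :=
        aux_deriv_zero_on_Iic (hGsm.differentiable (by simp)) hGz
      have hG''z : ∀ y ≤ τ₁, deriv (deriv G) y = 0 :=
        aux_deriv_zero_on_Iic (hG'sm.differentiable (by simp)) hG'z
      have hShift : ∀ (f : ℝ → ℝ) (u : ℝ),
          deriv (fun x => f (u + x)) = fun x => deriv f (u + x) :=
        fun f u => funext fun x => deriv_comp_const_add f u x
      have hmemG : ∀ u ≤ τ₁, memD1 (fun x => G (u + x)) := by
        intro u hu
        refine ⟨hGsm.comp (contDiff_const.add contDiff_id), ?_⟩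
        rw [deriv_comp_const_add, add_zero]
        exact hG'z u hu
      have hmemG' : ∀ u ≤ τ₁, memD1 (fun x => deriv G (u + x)) := by
        intro u hu
        refine ⟨hG'sm.comp (contDiff_const.add contDiff_id), ?_⟩
        rw [deriv_comp_const_add, add_zero]
        exact hG''z u hu
      obtain ⟨K1, hK1n⟩ :=
        (isCompact_Icc (a := (0:ℝ)) (b := 2*T)).exists_bound_of_continuousOn
        (hGsm.continuous_deriv (by simp)).continuousOn
      obtain ⟨K2, hK2n⟩ :=
        (isCompact_Icc (a := (0:ℝ)) (b := 2*T)).exists_bound_of_continuousOn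
        (hG'sm.continuous_deriv (by simp)).continuousOn
      have hK1 : ∀ u ∈ Icc (0:ℝ) τ₁, ∀ x ∈ Icc (0:ℝ) T, |deriv G (u + x)| ≤ K1 :=
        fun u hu x hx => by
          simpa [Real.norm_eq_abs] using hK1n (u + x) (hrange u hu x hx)
      have hK2 : ∀ u ∈ Icc (0:ℝ) τ₁, ∀ x ∈ Icc (0:ℝ) T, |deriv (deriv G) (u + x)| ≤ K2 :=
        fun u hu x hx => by
          simpa [Real.norm_eq_abs] using hK2n (u + x) (hrange u hu x hx)
      have hK20 : 0 ≤ K2 := le_trans (abs_nonneg _) (hK2 0 ⟨le_rfl, hτ₁⟩ 0 ⟨le_rfl, hT0⟩)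
      set D : ℝ → ℝ := fun r => ∫ ω in A, pairF (fun x => G (r + x)) (μ r ω) ∂Q with hD
      have hDD : ∀ t₁ t₂ : ℝ, s ≤ t₁ → t₁ ≤ t₂ → t₂ ≤ t →
          |D t₂ - D t₁| ≤ (2 * (K2 * M₀)) * (t₂ - t₁) ^ 2 := by
        intro t₁ t₂ h₁ h₂ h₃
        have h0t₁ : 0 ≤ t₁ := le_trans hs.1 h₁
        have ht₁τ : t₁ ≤ τ₁ := le_trans h₂ (le_trans h₃ ht.2)
        have ht₂τ : t₂ ≤ τ₁ := le_trans h₃ ht.2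
        have ht₂T : t₂ ≤ T := le_trans ht₂τ hτ₁T
        have htt2 : t₂ ∈ Icc (0:ℝ) T := ⟨le_trans h0t₁ h₂, ht₂T⟩
        -- FTC in the forward variable
        have e₁ := hFTC A hAm0 t₂ htt2 G hGsm t₁ t₂
        -- martingale identity in the time variable
        have e₂ := hP3 _ (hmemG t₁ ht₁τ) s t₁ t₂ hs.1 h₁ h₂ ht₂T A hA
        rw [hShift G t₁] at e₂
        have hint1 : IntervalIntegrable
            (fun v => ∫ ω in A, pairF (fun x => deriv G (v + x)) (μ t₂ ω) ∂Q)
            volume t₁ t₂ := by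
          have hcont : Continuous
              (fun v => ∫ ω in A, pairF (fun x => deriv G (v + x)) (μ t₂ ω) ∂Q) :=
            continuous_iff_continuousAt.2 fun v =>
              (hDer A hAm0 t₂ htt2 (deriv G) hG'sm v).continuousAt
          exact hcont.intervalIntegrable t₁ t₂
        have hint2 : IntervalIntegrable
            (fun v => ∫ ω in A, pairF (fun x => deriv G (t₁ + x)) (μ v ω) ∂Q)
            volume t₁ t₂ :=
          hGint _ ((hG'sm.continuous.comp (continuous_const.add continuous_id)).measurable)
            K1 (hK1 t₁ ⟨h0t₁, ht₁τ⟩) A t₁ t₂ h0t₁ h₂ ht₂T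
        have hDeq : D t₂ - D t₁ = ∫ v in t₁..t₂,
            ((∫ ω in A, pairF (fun x => deriv G (v + x)) (μ t₂ ω) ∂Q)
              - ∫ ω in A, pairF (fun x => deriv G (t₁ + x)) (μ v ω) ∂Q) := by
          rw [hD]
          simp only
          rw [intervalIntegral.integral_sub hint1 hint2, e₁]
          linarith [e₂]
        rw [hDeq]
        have hbound : ∀ v ∈ Set.uIoc t₁ t₂,
            ‖(∫ ω in A, pairF (fun x => deriv G (v + x)) (μ t₂ ω) ∂Q)
              - ∫ ω in A, pairF (fun x => deriv G (t₁ + x)) (μ v ω) ∂Q‖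
            ≤ 2 * (K2 * M₀) * (t₂ - t₁) := by
          intro v hv
          rw [uIoc_of_le h₂] at hv
          have hvτ : v ∈ Icc (0:ℝ) τ₁ := ⟨le_trans h0t₁ hv.1.le, le_trans hv.2 ht₂τ⟩
          have hvT : v ∈ Icc (0:ℝ) T := ⟨hvτ.1, le_trans hvτ.2 hτ₁T⟩
          -- first piece : |H'(v) - H'(t₁)| ≤ K2 M₀ (v - t₁)
          have p₁ := hFTC A hAm0 t₂ htt2 (deriv G) hG'sm t₁ v
          have hb₁ : |(∫ ω in A, pairF (fun x => deriv G (v + x)) (μ t₂ ω) ∂Q)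
              - ∫ ω in A, pairF (fun x => deriv G (t₁ + x)) (μ t₂ ω) ∂Q|
              ≤ (K2 * M₀) * (v - t₁) := by
            rw [← p₁]
            have := intervalIntegral.norm_integral_le_of_norm_le_const
              (C := K2 * M₀)
              (f := fun z => ∫ ω in A, pairF (fun x => deriv (deriv G) (z + x)) (μ t₂ ω) ∂Q)
              (a := t₁) (b := v) ?_
            · rw [Real.norm_eq_abs] at this
              rwa [abs_of_nonneg (by linarith [hv.1.le] : (0:ℝ) ≤ v - t₁)] at this
            · intro z hz
              rw [uIoc_of_le hv.1.le] at hz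
              have hzτ : z ∈ Icc (0:ℝ) τ₁ := ⟨le_trans h0t₁ hz.1.le, le_trans hz.2 hvτ.2⟩
              rw [Real.norm_eq_abs]
              exact hGB _ ((hG'sm.continuous_deriv (by simp)).comp
                  (continuous_const.add continuous_id)).measurable K2
                (hK2 z hzτ) A t₂ htt2
          -- second piece : |G(t₂) - G(v)| ≤ K2 M₀ (t₂ - v)
          have p₂ := hP3 _ (hmemG' t₁ ht₁τ) s v t₂ hs.1 (le_trans h₁ hv.1.le) hv.2 ht₂T A hA
          rw [hShift (deriv G) t₁] at p₂
          have hb₂ : |(∫ ω in A, pairF (fun x => deriv G (t₁ + x)) (μ t₂ ω) ∂Q)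
              - ∫ ω in A, pairF (fun x => deriv G (t₁ + x)) (μ v ω) ∂Q|
              ≤ (K2 * M₀) * (t₂ - v) := by
            rw [p₂]
            rw [abs_neg]
            have := intervalIntegral.norm_integral_le_of_norm_le_const
              (C := K2 * M₀)
              (f := fun z => ∫ ω in A, pairF (fun x => deriv (deriv G) (t₁ + x)) (μ z ω) ∂Q)
              (a := v) (b := t₂) ?_
            · rw [Real.norm_eq_abs] at this
              rwa [abs_of_nonneg (by linarith [hv.2] : (0:ℝ) ≤ t₂ - v)] at this
            · intro z hz
              rw [uIoc_of_le hv.2] at hz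
              have hzT : z ∈ Icc (0:ℝ) T := ⟨le_trans hvT.1 hz.1.le, le_trans hz.2 ht₂T⟩
              rw [Real.norm_eq_abs]
              exact hGB _ ((hG'sm.continuous_deriv (by simp)).comp
                  (continuous_const.add continuous_id)).measurable K2
                (hK2 t₁ ⟨h0t₁, ht₁τ⟩) A z hzT
          rw [Real.norm_eq_abs]
          calc |(∫ ω in A, pairF (fun x => deriv G (v + x)) (μ t₂ ω) ∂Q)
              - ∫ ω in A, pairF (fun x => deriv G (t₁ + x)) (μ v ω) ∂Q|
              ≤ |(∫ ω in A, pairF (fun x => deriv G (v + x)) (μ t₂ ω) ∂Q)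
                - ∫ ω in A, pairF (fun x => deriv G (t₁ + x)) (μ t₂ ω) ∂Q|
                + |(∫ ω in A, pairF (fun x => deriv G (t₁ + x)) (μ t₂ ω) ∂Q)
                - ∫ ω in A, pairF (fun x => deriv G (t₁ + x)) (μ v ω) ∂Q| := by
                  apply abs_sub_le
            _ ≤ (K2 * M₀) * (v - t₁) + (K2 * M₀) * (t₂ - v) := add_le_add hb₁ hb₂
            _ ≤ 2 * (K2 * M₀) * (t₂ - t₁) := by
                nlinarith [hv.1.le, hv.2, mul_nonneg hK20 hM₀nonneg]
        have := intervalIntegral.norm_integral_le_of_norm_le_const hbound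
        rw [Real.norm_eq_abs] at this
        rw [abs_of_nonneg (by linarith : (0:ℝ) ≤ t₂ - t₁)] at this
        calc |∫ v in t₁..t₂,
            ((∫ ω in A, pairF (fun x => deriv G (v + x)) (μ t₂ ω) ∂Q)
              - ∫ ω in A, pairF (fun x => deriv G (t₁ + x)) (μ v ω) ∂Q)|
            ≤ 2 * (K2 * M₀) * (t₂ - t₁) * (t₂ - t₁) := this
          _ = 2 * (K2 * M₀) * (t₂ - t₁) ^ 2 := by ring
      have hconst : D t = D s :=
        aux_const_of_sq hst (by positivity) (fun x y hx hxy hy => hDD x y hx hxy hy)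
      exact hconst
    -- pass to the limit
    have hlim : ∀ tt ∈ Icc (0:ℝ) τ₁,
        Tendsto (fun n => ∫ ω in A, pairF (fun x => g n (tt + x)) (μ tt ω) ∂Q) atTop
          (nhds (∫ ω in A, pairF (fun x => tgt (tt + x)) (μ tt ω) ∂Q)) := by
      intro tt htt
      have httT : tt ∈ Icc (0:ℝ) T := ⟨htt.1, le_trans htt.2 hτ₁T⟩
      have hinner : ∀ ω : Ω, Tendsto (fun n => pairF (fun x => g n (tt + x)) (μ tt ω)) atTop
          (nhds (pairF (fun x => tgt (tt + x)) (μ tt ω))) := by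
        intro ω
        refine tendsto_integral_of_dominated_convergence (fun _ => Cw) ?_ (integrable_const Cw)
          ?_ ?_
        · intro n
          exact (((hgsm n).continuous.comp (continuous_const.add continuous_id)).comp
            continuous_subtype_val).aestronglyMeasurable
        · intro n
          refine Eventually.of_forall fun x => ?_
          rw [Real.norm_eq_abs]
          exact hgshift n tt htt (x : ℝ) x.2
        · exact Eventually.of_forall fun x => hglim (tt + (x : ℝ))
      refine tendsto_integral_of_dominated_convergence
        (fun ω => Cw * pairF (fun _ => (1:ℝ)) (μ tt ω)) ?_
        (((hmassint tt httT).const_mul Cw).restrict) ?_ (Eventually.of_forall hinner)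
      · intro n
        exact ((((hprog _ (((hgsm n).continuous.comp
          (continuous_const.add continuous_id)).measurable)).stronglyAdapted tt).mono
          (ℱ.le tt)).aestronglyMeasurable).restrict
      · intro n
        refine Eventually.of_forall fun ω => ?_
        simpa [Real.norm_eq_abs] using
          aux_abs_pairF_le (fun x hx => hgshift n tt htt x hx) (μ tt ω)
    exact tendsto_nhds_unique (hlim s hs) ((hlim t ht).congr fun n => hKn n)
end
end

section
/- Let α ∈ C([0,T]) be non-negative and let g be the restriction to [0,T] of a C^∞ function on ℝ with g ≤ 0 on [0,T] and g'(0) = 0. Define ψ_t(x) := g((x−t)^+) / (1 − g((x−t)^+) ∫_0^t ½ α((x−s)^+) ds) for t, x ∈ [0,T]. Then the denominator is always ≥ 1 (so ψ is well defined), ψ_0 = g, each map x ↦ ψ_t(x) is non-positive and differentiable with ∂_x ψ_t(0) = 0, and ψ solves the Riccati PDE: for all t ∈ [0,T] and x ∈ [0,T], ∂_t ψ_t(x) = −∂_x ψ_t(x) + ½ α(x) ψ_t(x)² (explicit solution part of Theorem 5.12). -/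
open Set

noncomputable section

/-- If `g` is smooth with `g'(0) = 0`, then `v ↦ g (max v 0)` is differentiable everywhere,
with derivative `g' v` for `v > 0` and `0` otherwise. -/
lemma hasDerivAt_comp_max (g : ℝ → ℝ) (hg : ContDiff ℝ (⊤ : ℕ∞) g) (hg0 : deriv g 0 = 0)
    (y : ℝ) :
    HasDerivAt (fun v => g (max v 0)) (if 0 < y then deriv g y else 0) y := by
  have hgd : ∀ z : ℝ, HasDerivAt g (deriv g z) z :=
    fun z => (hg.differentiable (by simp) z).hasDerivAt
  rcases lt_trichotomy y 0 with hy | hy | hy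
  · rw [if_neg (by linarith)]
    have hev : (fun v : ℝ => g (max v 0)) =ᶠ[nhds y] fun _ => g 0 := by
      filter_upwards [Iio_mem_nhds hy] with v hv
      rw [max_eq_right (le_of_lt hv)]
    exact (hasDerivAt_const y (g 0)).congr_of_eventuallyEq hev
  · subst hy
    rw [if_neg (lt_irrefl 0)]
    have h0 : HasDerivAt g 0 0 := by have := hgd 0; rwa [hg0] at this
    rw [hasDerivAt_iff_isLittleO] at h0 ⊢
    have h1 : (fun v => g v - g 0) =o[nhds (0:ℝ)] fun v => v := by
      simpa using h0
    have htend : Filter.Tendsto (fun v : ℝ => max v 0) (nhds 0) (nhds 0) := by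
      have : Continuous (fun v : ℝ => max v 0) := continuous_id.max continuous_const
      simpa using this.tendsto 0
    have h2 : (fun v : ℝ => g (max v 0) - g 0) =o[nhds (0:ℝ)] fun v => max v 0 :=
      h1.comp_tendsto htend
    have h3 : (fun v : ℝ => max v 0) =O[nhds (0:ℝ)] fun v => v := by
      apply Asymptotics.isBigO_of_le
      intro v
      rw [Real.norm_eq_abs, Real.norm_eq_abs, abs_of_nonneg (le_max_right v 0)]
      exact max_le (le_abs_self v) (abs_nonneg v)
    simpa using h2.trans_isBigO h3
  · rw [if_pos hy]
    have hev : (fun v : ℝ => g (max v 0)) =ᶠ[nhds y] g := by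
      filter_upwards [Ioi_mem_nhds hy] with v hv
      rw [max_eq_left (le_of_lt hv)]
    exact (hgd y).congr_of_eventuallyEq hev

/-- **Explicit Riccati solution (part of Theorem 5.12).** For non-negative `α ∈ C([0,T])`
and `g` (restriction of a) smooth non-positive function with `g'(0) = 0`, the function
`ψ_t(x) = g((x−t)⁺) / (1 − g((x−t)⁺) ∫_0^t ½ α((x−s)⁺) ds)` is well defined (denominator
`≥ 1`), satisfies `ψ_0 = g`, is non-positive, differentiable in `x` with `∂_x ψ_t(0) = 0`,
and solves the Riccati PDE `∂_t ψ_t(x) = −∂_x ψ_t(x) + ½ α(x) ψ_t(x)²` on `[0,T]²`. -/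
theorem stmt7 {T : ℝ} (hT : 0 < T) (α g : ℝ → ℝ)
    (hαc : ContinuousOn α (Icc (0:ℝ) T)) (hα0 : ∀ x ∈ Icc (0:ℝ) T, 0 ≤ α x)
    (hg : ContDiff ℝ (⊤ : ℕ∞) g) (hgneg : ∀ x ∈ Icc (0:ℝ) T, g x ≤ 0)
    (hg0 : deriv g 0 = 0)
    (ψ : ℝ → ℝ → ℝ)
    (hψ : ∀ t x : ℝ, ψ t x =
      g (max (x - t) 0) /
        (1 - g (max (x - t) 0) * ∫ s in (0:ℝ)..t, (1/2) * α (max (x - s) 0))) :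
    (∀ t ∈ Icc (0:ℝ) T, ∀ x ∈ Icc (0:ℝ) T,
      1 ≤ 1 - g (max (x - t) 0) * ∫ s in (0:ℝ)..t, (1/2) * α (max (x - s) 0)) ∧
    (∀ x ∈ Icc (0:ℝ) T, ψ 0 x = g x) ∧
    (∀ t ∈ Icc (0:ℝ) T, ∀ x ∈ Icc (0:ℝ) T, ψ t x ≤ 0) ∧
    (∃ ψx : ℝ → ℝ → ℝ,
      (∀ t ∈ Icc (0:ℝ) T, ∀ x ∈ Icc (0:ℝ) T,
        HasDerivWithinAt (fun y => ψ t y) (ψx t x) (Icc (0:ℝ) T) x) ∧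
      (∀ t ∈ Icc (0:ℝ) T, ψx t 0 = 0) ∧
      (∀ t ∈ Icc (0:ℝ) T, ∀ x ∈ Icc (0:ℝ) T,
        HasDerivWithinAt (fun τ => ψ τ x)
          (-(ψx t x) + (1/2) * α x * (ψ t x)^2) (Icc (0:ℝ) T) t)) := by
  -- A continuous extension of α to all of ℝ, agreeing with α on [0,T]
  set A : ℝ → ℝ := fun v => α (min (max v 0) T) with hAdef
  have hmem : ∀ v : ℝ, min (max v 0) T ∈ Icc (0:ℝ) T := fun v =>
    ⟨le_min (le_max_right v 0) hT.le, min_le_right _ _⟩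
  have hAc : Continuous A := by
    apply hαc.comp_continuous _ hmem
    exact (continuous_id.max continuous_const).min continuous_const
  have hAeq : ∀ v ∈ Icc (0:ℝ) T, A v = α v := by
    intro v hv
    simp only [hAdef]
    rw [max_eq_left hv.1, min_eq_left hv.2]
  -- the integrand as a continuous function of one variable
  set h : ℝ → ℝ := fun σ => (1/2) * A (max σ 0) with hhdef
  have hhc : Continuous h := by
    exact continuous_const.mul (hAc.comp (continuous_id.max continuous_const))
  set H : ℝ → ℝ := fun y => ∫ σ in (0:ℝ)..y, h σ with hHdef
  have hH : ∀ y : ℝ, HasDerivAt H (h y) y := fun y =>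
    intervalIntegral.integral_hasDerivAt_right (hhc.intervalIntegrable 0 y)
      hhc.aestronglyMeasurable.stronglyMeasurableAtFilter hhc.continuousAt
  set J : ℝ → ℝ → ℝ := fun t x => ∫ s in (0:ℝ)..t, h (x - s) with hJdef
  have hJeq : ∀ t x : ℝ, J t x = H x - H (x - t) := by
    intro t x
    have h1 : J t x = ∫ σ in (x - t)..(x - 0), h σ :=
      intervalIntegral.integral_comp_sub_left h x
    rw [h1, sub_zero]
    rw [← intervalIntegral.integral_interval_sub_left (hhc.intervalIntegrable 0 x)
      (hhc.intervalIntegrable 0 (x - t))]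
  set N : ℝ → ℝ → ℝ := fun t x => g (max (x - t) 0) with hNdef
  set Φ : ℝ → ℝ → ℝ := fun t x => N t x / (1 - N t x * J t x) with hΦdef
  -- agreement of the two integrals on the domain
  have hJα : ∀ t ∈ Icc (0:ℝ) T, ∀ x ∈ Icc (0:ℝ) T,
      J t x = ∫ s in (0:ℝ)..t, (1/2) * α (max (x - s) 0) := by
    intro t ht x hx
    apply intervalIntegral.integral_congr
    intro s hs
    rw [uIcc_of_le ht.1] at hs
    have hmem' : max (x - s) 0 ∈ Icc (0:ℝ) T := by
      constructor
      · exact le_max_right _ _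
      · exact max_le (by linarith [hs.1, hx.2]) hT.le
    simp only [hhdef]
    rw [hAeq _ hmem']
  have hψΦ : ∀ t ∈ Icc (0:ℝ) T, ∀ x ∈ Icc (0:ℝ) T, ψ t x = Φ t x := by
    intro t ht x hx
    rw [hψ, hΦdef, ← hJα t ht x hx]
  -- the denominator bound
  have hIpos : ∀ t ∈ Icc (0:ℝ) T, ∀ x ∈ Icc (0:ℝ) T,
      (0:ℝ) ≤ ∫ s in (0:ℝ)..t, (1/2) * α (max (x - s) 0) := by
    intro t ht x hx
    apply intervalIntegral.integral_nonneg ht.1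
    intro s hs
    have : max (x - s) 0 ∈ Icc (0:ℝ) T :=
      ⟨le_max_right _ _, max_le (by linarith [hs.1, hx.2]) hT.le⟩
    have := hα0 _ this
    linarith
  have hgneg' : ∀ t ∈ Icc (0:ℝ) T, ∀ x ∈ Icc (0:ℝ) T, g (max (x - t) 0) ≤ 0 := by
    intro t ht x hx
    apply hgneg
    exact ⟨le_max_right _ _, max_le (by linarith [ht.1, hx.2]) hT.le⟩
  have part1 : ∀ t ∈ Icc (0:ℝ) T, ∀ x ∈ Icc (0:ℝ) T,
      1 ≤ 1 - g (max (x - t) 0) * ∫ s in (0:ℝ)..t, (1/2) * α (max (x - s) 0) := by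
    intro t ht x hx
    nlinarith [hIpos t ht x hx, hgneg' t ht x hx]
  have hD1 : ∀ t ∈ Icc (0:ℝ) T, ∀ x ∈ Icc (0:ℝ) T, 1 ≤ 1 - N t x * J t x := by
    intro t ht x hx
    rw [hJα t ht x hx]
    exact part1 t ht x hx
  have hDne : ∀ t ∈ Icc (0:ℝ) T, ∀ x ∈ Icc (0:ℝ) T, 1 - N t x * J t x ≠ 0 := by
    intro t ht x hx
    have := hD1 t ht x hx
    linarith
  -- derivatives of the building blocks
  set Nx : ℝ → ℝ → ℝ := fun t x => if t < x then deriv g (x - t) else 0 with hNxdef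
  have hNx : ∀ t x : ℝ, HasDerivAt (fun y => N t y) (Nx t x) x := by
    intro t x
    have := (hasDerivAt_comp_max g hg hg0 (x - t)).comp x ((hasDerivAt_id x).sub_const t)
    simpa [Function.comp_def, sub_pos] using this
  have hNt : ∀ t x : ℝ, HasDerivAt (fun τ => N τ x) (-(Nx t x)) t := by
    intro t x
    have hinner : HasDerivAt (fun τ : ℝ => x - τ) (-1) t := by
      simpa using (hasDerivAt_id t).const_sub x
    have := (hasDerivAt_comp_max g hg hg0 (x - t)).comp t hinner
    simpa [Function.comp_def, sub_pos] using this
  have hJx : ∀ t x : ℝ, HasDerivAt (fun y => J t y) (h x - h (x - t)) x := by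
    intro t x
    have heq : (fun y => J t y) = fun y => H y - H (y - t) := funext fun y => hJeq t y
    rw [heq]
    have h2 : HasDerivAt (fun y : ℝ => H (y - t)) (h (x - t)) x := by
      have := (hH (x - t)).comp x ((hasDerivAt_id x).sub_const t)
      simpa [Function.comp_def] using this
    exact (hH x).sub h2
  have hJt : ∀ t x : ℝ, HasDerivAt (fun τ => J τ x) (h (x - t)) t := by
    intro t x
    have heq : (fun τ => J τ x) = fun τ => H x - H (x - τ) := funext fun τ => hJeq τ x
    rw [heq]
    have hinner : HasDerivAt (fun τ : ℝ => x - τ) (-1) t := by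
      simpa using (hasDerivAt_id t).const_sub x
    have h2 : HasDerivAt (fun τ : ℝ => H (x - τ)) (h (x - t) * (-1)) t :=
      (hH (x - t)).comp t hinner
    have := h2.const_sub (H x)
    simpa using this
  -- the candidate x-derivative
  set ψx : ℝ → ℝ → ℝ := fun t x =>
    (Nx t x * (1 - N t x * J t x) -
      N t x * -(Nx t x * J t x + N t x * (h x - h (x - t)))) / (1 - N t x * J t x) ^ 2
    with hψxdef
  have hΦx : ∀ t ∈ Icc (0:ℝ) T, ∀ x ∈ Icc (0:ℝ) T,
      HasDerivAt (fun y => Φ t y) (ψx t x) x := by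
    intro t ht x hx
    have hd : HasDerivAt (fun y => 1 - N t y * J t y)
        (-(Nx t x * J t x + N t x * (h x - h (x - t)))) x :=
      ((hNx t x).mul (hJx t x)).const_sub 1
    exact (hNx t x).div hd (hDne t ht x hx)
  have hΦt : ∀ t ∈ Icc (0:ℝ) T, ∀ x ∈ Icc (0:ℝ) T,
      HasDerivAt (fun τ => Φ τ x)
        ((-(Nx t x) * (1 - N t x * J t x) -
          N t x * -(-(Nx t x) * J t x + N t x * h (x - t))) / (1 - N t x * J t x) ^ 2) t := by
    intro t ht x hx
    have hd : HasDerivAt (fun τ => 1 - N τ x * J τ x)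
        (-(-(Nx t x) * J t x + N t x * h (x - t))) t :=
      ((hNt t x).mul (hJt t x)).const_sub 1
    exact (hNt t x).div hd (hDne t ht x hx)
  refine ⟨part1, ?_, ?_, ψx, ?_, ?_, ?_⟩
  · -- ψ 0 x = g x
    intro x hx
    rw [hψ]
    simp [max_eq_left hx.1]
  · -- ψ ≤ 0
    intro t ht x hx
    rw [hψ]
    apply div_nonpos_of_nonpos_of_nonneg (hgneg' t ht x hx)
    have := part1 t ht x hx
    linarith
  · -- x-derivative
    intro t ht x hx
    exact ((hΦx t ht x hx).hasDerivWithinAt).congr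
      (fun y hy => hψΦ t ht y hy) (hψΦ t ht x hx)
  · -- ψx t 0 = 0
    intro t ht
    have h1 : Nx t 0 = 0 := by
      rw [hNxdef]
      simp only
      rw [if_neg (not_lt.2 ht.1)]
    have h2 : h 0 - h (0 - t) = 0 := by
      simp only [hhdef]
      rw [zero_sub, max_eq_right (neg_nonpos_of_nonneg ht.1)]
      simp
    rw [hψxdef]
    simp only [h1, h2]
    simp
  · -- t-derivative / Riccati PDE
    intro t ht x hx
    have key := hΦt t ht x hx
    have hval : (-(Nx t x) * (1 - N t x * J t x) -
          N t x * -(-(Nx t x) * J t x + N t x * h (x - t))) / (1 - N t x * J t x) ^ 2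
        = -(ψx t x) + (1/2) * α x * (ψ t x) ^ 2 := by
      have hψval : ψ t x = N t x / (1 - N t x * J t x) := hψΦ t ht x hx
      have hhx : h x = (1/2) * α x := by
        simp only [hhdef]
        rw [max_eq_left hx.1, hAeq x hx]
      have hne := hDne t ht x hx
      rw [hψval]
      simp only [hψxdef]
      rw [hhx]
      field_simp
      ring
    rw [← hval]
    exact key.hasDerivWithinAt.congr (fun τ hτ => hψΦ τ hτ x hx) (hψΦ t ht x hx)
end
end

section
/- Let (ν_t)_{t∈[0,T]} be a progressively measurable M_+(E)-valued process on a filtered probability space with E[ν_0(E)] < ∞, such that for every φ ∈ C(E) the process t ↦ ⟨φ, ν_t⟩ is a martingale. Then for every bounded continuous Ψ : [0,T] × E → ℝ whose partial derivative ∂_t Ψ exists, is bounded and continuous, the process t ↦ ⟨Ψ(t, ·), ν_t⟩ − ⟨Ψ(0, ·), ν_0⟩ − ∫_0^t ⟨∂_t Ψ(s, ·), ν_s⟩ ds is a martingale on [0,T] (product-rule martingale lemma from the proof of Remark 3.4). -/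
open MeasureTheory Set Filter

noncomputable section

namespace Stmt13Aux

/-- clamp to `[0,T]`. -/
def clamp (T x : ℝ) : ℝ := max 0 (min x T)

lemma clamp_mem {T : ℝ} (hT : 0 ≤ T) (x : ℝ) : clamp T x ∈ Icc (0:ℝ) T :=
  ⟨le_max_left _ _, max_le hT (min_le_right _ _)⟩

lemma clamp_of_mem {T x : ℝ} (hx : x ∈ Icc (0:ℝ) T) : clamp T x = x := by
  unfold clamp; rw [min_eq_left hx.2, max_eq_right hx.1]

lemma continuous_clamp {T : ℝ} : Continuous (clamp T) := by
  unfold clamp; fun_prop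

/-- Regularize a two-variable function continuous on `[0,T]²` to a globally continuous one. -/
def reg2 (T : ℝ) (Φ : ℝ → ℝ → ℝ) (u x : ℝ) : ℝ := Φ (clamp T u) (clamp T x)

lemma reg2_continuous {T : ℝ} (hT : 0 ≤ T) {Φ : ℝ → ℝ → ℝ}
    (hΦ : ContinuousOn (fun p : ℝ × ℝ => Φ p.1 p.2) (Icc (0:ℝ) T ×ˢ Icc (0:ℝ) T)) :
    Continuous (fun p : ℝ × ℝ => reg2 T Φ p.1 p.2) := by
  have : (fun p : ℝ × ℝ => reg2 T Φ p.1 p.2)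
      = (fun p : ℝ × ℝ => Φ p.1 p.2) ∘ (fun p : ℝ × ℝ => (clamp T p.1, clamp T p.2)) := rfl
  rw [this]
  refine hΦ.comp_continuous ((continuous_clamp.comp continuous_fst).prodMk (continuous_clamp.comp continuous_snd)) ?_
  exact fun p => ⟨clamp_mem hT _, clamp_mem hT _⟩

lemma reg2_eq {T : ℝ} {Φ : ℝ → ℝ → ℝ} {u x : ℝ} (hu : u ∈ Icc (0:ℝ) T)
    (hx : x ∈ Icc (0:ℝ) T) : reg2 T Φ u x = Φ u x := by
  unfold reg2; rw [clamp_of_mem hu, clamp_of_mem hx]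

lemma reg2_bdd {T : ℝ} (hT : 0 ≤ T) {Φ : ℝ → ℝ → ℝ} {C : ℝ}
    (hC : ∀ t ∈ Icc (0:ℝ) T, ∀ x ∈ Icc (0:ℝ) T, |Φ t x| ≤ C) (u x : ℝ) :
    |reg2 T Φ u x| ≤ C :=
  hC _ (clamp_mem hT _) _ (clamp_mem hT _)

lemma pairF_congr {T : ℝ} {φ ψ : ℝ → ℝ} (h : ∀ x ∈ Icc (0:ℝ) T, φ x = ψ x) (ν : MV T) :
    pairF φ ν = pairF ψ ν :=
  integral_congr_ae (Eventually.of_forall fun x => h x x.2)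

lemma pairF_one {T : ℝ} (ν : MV T) : pairF (fun _ => 1) ν = (ν.mass : ℝ) := by
  unfold pairF
  rw [integral_const, smul_eq_mul, mul_one]
  rw [measureReal_def, ← FiniteMeasure.ennreal_mass, ENNReal.coe_toReal]

lemma pairF_one_nonneg {T : ℝ} (ν : MV T) : 0 ≤ pairF (fun _ => 1) ν := by
  rw [pairF_one]; exact (ν.mass).coe_nonneg

lemma pairF_abs_le {T : ℝ} {φ : ℝ → ℝ} {C : ℝ} (h : ∀ x ∈ Icc (0:ℝ) T, |φ x| ≤ C)
    (ν : MV T) : |pairF φ ν| ≤ C * pairF (fun _ => 1) ν := by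
  rw [pairF_one]
  have := norm_integral_le_of_norm_le_const (μ := (ν : Measure (Icc (0:ℝ) T)))
    (f := fun x : Icc (0:ℝ) T => φ (x:ℝ)) (C := C) (Eventually.of_forall fun x => by
      simpa using h _ x.2)
  rw [Real.norm_eq_abs] at this
  refine this.trans ?_
  rw [measureReal_def, ← FiniteMeasure.ennreal_mass, ENNReal.coe_toReal]

lemma integrable_pair {T : ℝ} {φ : ℝ → ℝ} (hφ : Continuous φ) (ν : MV T) :
    Integrable (fun x : Icc (0:ℝ) T => φ (x:ℝ)) (ν : Measure (Icc (0:ℝ) T)) := by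
  have : Continuous (fun x : Icc (0:ℝ) T => φ (x:ℝ)) := hφ.comp continuous_subtype_val
  exact (BoundedContinuousFunction.mkOfCompact ⟨_, this⟩).integrable _

lemma pairF_sub {T : ℝ} {φ ψ : ℝ → ℝ} (hφ : Continuous φ) (hψ : Continuous ψ) (ν : MV T) :
    pairF (fun x => φ x - ψ x) ν = pairF φ ν - pairF ψ ν :=
  integral_sub (integrable_pair hφ ν) (integrable_pair hψ ν)

/-- Joint strong measurability of `(v, a) ↦ ⟨Φ(v,·), V a⟩`. -/
lemma sm_pair {T : ℝ} {α : Type*} [MeasurableSpace α] (V : α → MV T)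
    (hV : ∀ φ : ℝ → ℝ, Measurable φ → StronglyMeasurable (fun a => pairF φ (V a)))
    (Φ : ℝ → ℝ → ℝ) (hΦ : Continuous (fun p : ℝ × ℝ => Φ p.1 p.2))
    (C : ℝ) (hb : ∀ v x, |Φ v x| ≤ C) :
    StronglyMeasurable (fun p : ℝ × α => pairF (Φ p.1) (V p.2)) := by
  have h := stronglyMeasurable_uncurry_of_continuous_of_stronglyMeasurable
    (u := fun v a => pairF (Φ v) (V a)) ?_ ?_
  · exact h
  · intro a
    unfold pairF
    refine continuous_of_dominated (bound := fun _ => C) ?_ ?_ ?_ ?_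
    · intro v
      exact (Continuous.aestronglyMeasurable (by
        exact (hΦ.comp (continuous_const.prodMk continuous_subtype_val) : _)))
    · intro v
      exact Eventually.of_forall fun x => by simpa [Real.norm_eq_abs] using hb v x
    · exact integrable_const _
    · exact Eventually.of_forall fun x =>
        hΦ.comp (continuous_id.prodMk continuous_const)
  · intro v
    exact hV (Φ v) (hΦ.comp (continuous_const.prodMk continuous_id)).measurable

end Stmt13Aux

namespace Stmt13Aux

lemma prod_mono {α β : Type*} {m1 m2 : MeasurableSpace α} {n1 n2 : MeasurableSpace β}
    (h1 : m1 ≤ m2) (h2 : n1 ≤ n2) : m1.prod n1 ≤ m2.prod n2 :=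
  sup_le_sup (MeasurableSpace.comap_mono h1) (MeasurableSpace.comap_mono h2)

lemma cont_slice {Φ : ℝ → ℝ → ℝ} (h : Continuous fun p : ℝ × ℝ => Φ p.1 p.2) (v : ℝ) :
    Continuous (Φ v) :=
  show Continuous fun x => Φ v x from h.comp (continuous_const.prodMk continuous_id)

lemma cont_slice' {Φ : ℝ → ℝ → ℝ} (h : Continuous fun p : ℝ × ℝ => Φ p.1 p.2) (x : ℝ) :
    Continuous (fun v => Φ v x) :=
  h.comp (continuous_id.prodMk continuous_const)

/-- Strong measurability of `(r, ω) ↦ ⟨Φ(r,·), ν_{min r t}(ω)⟩`. -/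
lemma sm_min {T : ℝ} {Ω' : Type*} [mΩ' : MeasurableSpace Ω'] {t : ℝ} (W : ℝ → Ω' → MV T)
    (hW : ∀ φ : ℝ → ℝ, Measurable φ →
      StronglyMeasurable[Subtype.instMeasurableSpace.prod mΩ']
        (fun p : Set.Iic t × Ω' => pairF φ (W p.1 p.2)))
    (Φ : ℝ → ℝ → ℝ) (hΦ : Continuous (fun p : ℝ × ℝ => Φ p.1 p.2))
    (C : ℝ) (hb : ∀ v x, |Φ v x| ≤ C) :
    StronglyMeasurable (fun p : ℝ × Ω' => pairF (Φ p.1) (W (min p.1 t) p.2)) := by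
  have hV : ∀ φ : ℝ → ℝ, Measurable φ →
      StronglyMeasurable (fun p : ℝ × Ω' => pairF φ (W (min p.1 t) p.2)) := by
    intro φ hφ
    have g : Measurable (fun p : ℝ × Ω' =>
        ((⟨min p.1 t, mem_Iic.mpr (min_le_right _ _)⟩ : Set.Iic t), p.2)) :=
      ((measurable_fst.min measurable_const).subtype_mk).prodMk measurable_snd
    exact (hW φ hφ).comp_measurable g
  have h1 := sm_pair (α := ℝ × Ω') (fun p => W (min p.1 t) p.2) hV Φ hΦ C hb
  exact h1.comp_measurable (measurable_fst.prodMk measurable_id)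

/-- FTC + Fubini: `∫_{(s,t]} ⟨Φt(r,·), μ⟩ dr = ⟨Φ(t,·), μ⟩ - ⟨Φ(s,·), μ⟩`. -/
lemma ftc_pair {T : ℝ} (hT : 0 < T) {Φ Φt : ℝ → ℝ → ℝ}
    (hΦ : Continuous (fun p : ℝ × ℝ => Φ p.1 p.2))
    (hΦt : Continuous (fun p : ℝ × ℝ => Φt p.1 p.2))
    {C : ℝ} (hb : ∀ v x, |Φt v x| ≤ C)
    (hder : ∀ x ∈ Icc (0:ℝ) T, ∀ u ∈ Icc (0:ℝ) T,
      HasDerivWithinAt (fun τ => Φ τ x) (Φt u x) (Icc (0:ℝ) T) u)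
    {s t : ℝ} (hs : s ∈ Icc (0:ℝ) T) (ht : t ∈ Icc (0:ℝ) T) (hst : s ≤ t) (μ : MV T) :
    ∫ r in Ioc s t, pairF (Φt r) μ = pairF (Φ t) μ - pairF (Φ s) μ := by
  haveI : IsFiniteMeasure (volume.restrict (Ioc s t)) :=
    ⟨by rw [Measure.restrict_apply_univ]; exact measure_Ioc_lt_top⟩
  have hptwise : ∀ x : Icc (0:ℝ) T, Φ t (x:ℝ) - Φ s (x:ℝ) = ∫ r in Ioc s t, Φt r (x:ℝ) := by
    intro x
    have hcont : ContinuousOn (fun τ => Φ τ (x:ℝ)) (Icc s t) :=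
      (cont_slice' hΦ (x:ℝ)).continuousOn
    have hderiv : ∀ r ∈ Ioo s t, HasDerivWithinAt (fun τ => Φ τ (x:ℝ)) (Φt r (x:ℝ)) (Ioi r) r := by
      intro r hr
      have hrT : r ∈ Icc (0:ℝ) T := ⟨hs.1.trans hr.1.le, hr.2.le.trans ht.2⟩
      have h0r : 0 < r := lt_of_le_of_lt hs.1 hr.1
      have hrT' : r < T := lt_of_lt_of_le hr.2 ht.2
      exact ((hder _ x.2 r hrT).hasDerivAt (Icc_mem_nhds h0r hrT')).hasDerivWithinAt
    have hii : IntervalIntegrable (fun r => Φt r (x:ℝ)) volume s t :=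
      (cont_slice' hΦt (x:ℝ)).intervalIntegrable _ _
    have h := intervalIntegral.integral_eq_sub_of_hasDeriv_right_of_le hst hcont hderiv hii
    rw [intervalIntegral.integral_of_le hst] at h
    rw [← h]
  have hIntL : Integrable (Function.uncurry fun (x : Icc (0:ℝ) T) (r : ℝ) => Φt r (x:ℝ))
      ((μ : Measure (Icc (0:ℝ) T)).prod (volume.restrict (Ioc s t))) := by
    refine Integrable.mono' (integrable_const C) ?_ ?_
    · exact (hΦt.comp ((continuous_snd).prodMk
        (continuous_subtype_val.comp continuous_fst))).aestronglyMeasurable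
    · exact Eventually.of_forall fun p => by
        simpa [Function.uncurry, Real.norm_eq_abs] using hb p.2 (p.1 : ℝ)
  calc ∫ r in Ioc s t, pairF (Φt r) μ
      = ∫ r in Ioc s t, ∫ x : Icc (0:ℝ) T, Φt r (x:ℝ) ∂(μ : Measure _) := rfl
    _ = ∫ x : Icc (0:ℝ) T, (∫ r in Ioc s t, Φt r (x:ℝ)) ∂(μ : Measure _) :=
        (integral_integral_swap hIntL).symm
    _ = ∫ x : Icc (0:ℝ) T, (Φ t (x:ℝ) - Φ s (x:ℝ)) ∂(μ : Measure _) := by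
        refine integral_congr_ae (Eventually.of_forall fun x => ?_)
        simp only []; rw [hptwise x]
    _ = pairF (Φ t) μ - pairF (Φ s) μ :=
        integral_sub (integrable_pair (cont_slice hΦ t) μ) (integrable_pair (cont_slice hΦ s) μ)

end Stmt13Aux
/-- Transfer `IsMartOn` along an equality of processes on the time interval. -/
lemma isMartOn_congr {Ω : Type*} {m0 : MeasurableSpace Ω} {ℱ : Filtration ℝ m0}
    {Q : Measure Ω} {a b : ℝ} {X Y : ℝ → Ω → ℝ} (h : ∀ t ∈ Icc a b, X t = Y t)
    (hY : IsMartOn ℱ Q a b Y) : IsMartOn ℱ Q a b X := by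
  constructor
  · intro t ht; rw [h t ht]; exact hY.1 t ht
  · intro s t hs ht hst; rw [h t ht, h s hs]; exact hY.2 s t hs ht hst

/-- **Product-rule martingale lemma (proof of Remark 3.4).** If `⟨φ, ν_t⟩` is a martingale
for every `φ ∈ C(E)` and `E[ν_0(E)] < ∞`, then for every bounded continuous
`Ψ : [0,T] × E → ℝ` with bounded continuous time derivative `∂_t Ψ`, the process
`⟨Ψ(t,·), ν_t⟩ − ⟨Ψ(0,·), ν_0⟩ − ∫_0^t ⟨∂_t Ψ(s,·), ν_s⟩ ds` is a martingale on `[0,T]`. -/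
theorem stmt13 {T : ℝ} (hT : 0 < T)
    {Ω : Type*} {m0 : MeasurableSpace Ω} (ℱ : Filtration ℝ m0)
    (Q : Measure Ω) [IsProbabilityMeasure Q]
    (ν : ℝ → Ω → MV T)
    (hprog : ∀ φ : ℝ → ℝ, Measurable φ →
      ProgMeasurable ℱ (fun t ω => pairF φ (ν t ω)))
    (hint : Integrable (fun ω => (((ν 0 ω).mass : ℝ))) Q)
    (hmart : ∀ φ : ℝ → ℝ, ContinuousOn φ (Icc (0:ℝ) T) →
      IsMartOn ℱ Q 0 T (fun t ω => pairF φ (ν t ω)))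
    (Ψ Ψt : ℝ → ℝ → ℝ)
    (hΨcont : ContinuousOn (fun p : ℝ × ℝ => Ψ p.1 p.2) (Icc (0:ℝ) T ×ˢ Icc (0:ℝ) T))
    (hΨbdd : ∃ C : ℝ, ∀ t ∈ Icc (0:ℝ) T, ∀ x ∈ Icc (0:ℝ) T, |Ψ t x| ≤ C)
    (hΨt : ∀ x ∈ Icc (0:ℝ) T, ∀ t ∈ Icc (0:ℝ) T,
      HasDerivWithinAt (fun τ => Ψ τ x) (Ψt t x) (Icc (0:ℝ) T) t)
    (hΨtcont : ContinuousOn (fun p : ℝ × ℝ => Ψt p.1 p.2) (Icc (0:ℝ) T ×ˢ Icc (0:ℝ) T))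
    (hΨtbdd : ∃ C : ℝ, ∀ t ∈ Icc (0:ℝ) T, ∀ x ∈ Icc (0:ℝ) T, |Ψt t x| ≤ C) :
    IsMartOn ℱ Q 0 T (fun t ω =>
      pairF (fun x => Ψ t x) (ν t ω) - pairF (fun x => Ψ 0 x) (ν 0 ω)
        - ∫ s in (0:ℝ)..t, pairF (fun x => Ψt s x) (ν s ω)) := by
  classical
  obtain ⟨C₁, hC₁⟩ := hΨbdd
  obtain ⟨C₂, hC₂⟩ := hΨtbdd
  have hT' : (0:ℝ) ≤ T := hT.le
  set Ψ' : ℝ → ℝ → ℝ := Stmt13Aux.reg2 T Ψ with hΨ'def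
  set Ψt' : ℝ → ℝ → ℝ := Stmt13Aux.reg2 T Ψt with hΨt'def
  have cΨ' : Continuous fun p : ℝ × ℝ => Ψ' p.1 p.2 := Stmt13Aux.reg2_continuous hT' hΨcont
  have cΨt' : Continuous fun p : ℝ × ℝ => Ψt' p.1 p.2 := Stmt13Aux.reg2_continuous hT' hΨtcont
  have bΨ' : ∀ u x, |Ψ' u x| ≤ C₁ := Stmt13Aux.reg2_bdd hT' hC₁
  have bΨt' : ∀ u x, |Ψt' u x| ≤ C₂ := Stmt13Aux.reg2_bdd hT' hC₂
  have hsliceΨ' : ∀ r : ℝ, ContinuousOn (Ψ' r) (Icc (0:ℝ) T) :=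
    fun r => (Stmt13Aux.cont_slice cΨ' r).continuousOn
  have hsliceΨt' : ∀ r : ℝ, ContinuousOn (Ψt' r) (Icc (0:ℝ) T) :=
    fun r => (Stmt13Aux.cont_slice cΨt' r).continuousOn
  have h0T : (0:ℝ) ∈ Icc (0:ℝ) T := ⟨le_refl 0, hT'⟩
  set A' : ℝ → Ω → ℝ := fun u ω => pairF (Ψ' u) (ν u ω) with hA'def
  set P : ℝ → Ω → ℝ := fun r ω => pairF (Ψt' r) (ν r ω) with hPdef
  set I' : ℝ → Ω → ℝ := fun u ω => ∫ r in Ioc (0:ℝ) u, P r ω with hI'def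
  -- rewrite the statement process
  have hpairA : ∀ u, u ∈ Icc (0:ℝ) T → ∀ ω : Ω,
      pairF (fun x => Ψ u x) (ν u ω) = A' u ω := fun u hu ω =>
    Stmt13Aux.pairF_congr (fun x hx => (Stmt13Aux.reg2_eq hu hx).symm) _
  have hXrw : ∀ u ∈ Icc (0:ℝ) T,
      (fun ω => pairF (fun x => Ψ u x) (ν u ω) - pairF (fun x => Ψ 0 x) (ν 0 ω)
        - ∫ s in (0:ℝ)..u, pairF (fun x => Ψt s x) (ν s ω))
      = fun ω => A' u ω - A' 0 ω - I' u ω := by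
    intro u hu
    funext ω
    rw [hpairA u hu ω, hpairA 0 h0T ω]
    congr 1
    rw [intervalIntegral.integral_of_le hu.1]
    refine setIntegral_congr_fun measurableSet_Ioc (fun r hr => ?_)
    exact Stmt13Aux.pairF_congr
      (fun x hx => (Stmt13Aux.reg2_eq ⟨hr.1.le, hr.2.trans hu.2⟩ hx).symm) _
  refine isMartOn_congr hXrw ?_
  -- basic integrability facts
  have hm1 := hmart (fun _ => (1:ℝ)) continuousOn_const
  have hInt1 : ∀ r ∈ Icc (0:ℝ) T, Integrable (fun ω => pairF (fun _ => (1:ℝ)) (ν r ω)) Q :=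
    fun r hr => (hm1.1 r hr).1
  set m₀ : ℝ := ∫ ω, pairF (fun _ => (1:ℝ)) (ν 0 ω) ∂Q with hm₀def
  have hMean1 : ∀ r ∈ Icc (0:ℝ) T, ∫ ω, pairF (fun _ => (1:ℝ)) (ν r ω) ∂Q = m₀ := by
    intro r hr
    have hc := hm1.2 0 r h0T hr hr.1
    rw [hm₀def, ← integral_condExp (μ := Q) (f := fun ω => pairF (fun _ => (1:ℝ)) (ν r ω)) (ℱ.le 0)]
    exact integral_congr_ae hc
  have hIA : ∀ u ∈ Icc (0:ℝ) T, Integrable (fun ω => A' u ω) Q :=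
    fun u hu => ((hmart (Ψ' u) (hsliceΨ' u)).1 u hu).1
  -- set-integral martingale property
  have hsetMart : ∀ φ : ℝ → ℝ, ContinuousOn φ (Icc (0:ℝ) T) → ∀ s t : ℝ, s ∈ Icc (0:ℝ) T →
      t ∈ Icc (0:ℝ) T → s ≤ t → ∀ A : Set Ω, MeasurableSet[ℱ s] A →
      ∫ ω in A, pairF φ (ν t ω) ∂Q = ∫ ω in A, pairF φ (ν s ω) ∂Q := by
    intro φ hφ s t hs ht hst A hA
    have h := (hmart φ hφ).2 s t hs ht hst
    have hintt := ((hmart φ hφ).1 t ht).1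
    rw [← setIntegral_condExp (ℱ.le s) hintt hA]
    exact setIntegral_congr_ae (ℱ.le s A hA) (h.mono fun ω hω _ => hω)
  -- joint measurability of P with ambient σ-algebra
  have hWamb : ∀ t : ℝ, ∀ φ : ℝ → ℝ, Measurable φ →
      StronglyMeasurable[Subtype.instMeasurableSpace.prod m0]
        (fun p : Set.Iic t × Ω => pairF φ (ν p.1 p.2)) := by
    intro t φ hφ
    exact (hprog φ hφ t).mono (Stmt13Aux.prod_mono le_rfl (ℱ.le t))
  have smAmb : ∀ t : ℝ, StronglyMeasurable
      (fun p : ℝ × Ω => pairF (Ψt' p.1) (ν (min p.1 t) p.2)) :=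
    fun t => Stmt13Aux.sm_min ν (hWamb t) Ψt' cΨt' C₂ bΨt'
  have aesmP : ∀ t : ℝ, AEStronglyMeasurable (fun p : ℝ × Ω => P p.1 p.2)
      ((volume.restrict (Ioc (0:ℝ) t)).prod Q) := by
    intro t
    refine (smAmb t).aestronglyMeasurable.congr ?_
    rw [show ((volume.restrict (Ioc (0:ℝ) t)).prod Q)
        = ((volume.prod Q).restrict ((Ioc (0:ℝ) t) ×ˢ univ)) by
      rw [← Measure.prod_restrict, Measure.restrict_univ]]
    refine ae_restrict_of_forall_mem (measurableSet_Ioc.prod MeasurableSet.univ) ?_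
    rintro ⟨r, ω⟩ ⟨hr, -⟩
    simp only [min_eq_left hr.2]; rfl
  -- product integrability of P
  have hIntP : ∀ t ∈ Icc (0:ℝ) T, Integrable (fun p : ℝ × Ω => P p.1 p.2)
      ((volume.restrict (Ioc (0:ℝ) t)).prod Q) := by
    intro t ht
    refine (integrable_prod_iff (aesmP t)).2 ⟨?_, ?_⟩
    · refine ae_restrict_of_forall_mem measurableSet_Ioc ?_
      intro r hr
      exact ((hmart (Ψt' r) (hsliceΨt' r)).1 r ⟨hr.1.le, hr.2.trans ht.2⟩).1
    · refine Integrable.mono' (integrable_const (C₂ * m₀))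
        ((aesmP t).norm.integral_prod_right') ?_
      refine ae_restrict_of_forall_mem measurableSet_Ioc ?_
      intro r hr
      have hrIcc : r ∈ Icc (0:ℝ) T := ⟨hr.1.le, hr.2.trans ht.2⟩
      have hintr := ((hmart (Ψt' r) (hsliceΨt' r)).1 r hrIcc).1
      have h1r := hInt1 r hrIcc
      have hb2 : ∫ ω, ‖P r ω‖ ∂Q ≤ C₂ * m₀ := by
        have hle : ∫ ω, ‖P r ω‖ ∂Q ≤ ∫ ω, C₂ * pairF (fun _ => (1:ℝ)) (ν r ω) ∂Q := by
          refine integral_mono hintr.norm (h1r.const_mul C₂) ?_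
          intro ω
          simpa [Real.norm_eq_abs] using Stmt13Aux.pairF_abs_le (fun x _ => bΨt' r x) (ν r ω)
        rwa [integral_const_mul, hMean1 r hrIcc] at hle
      have hnn : 0 ≤ ∫ ω, ‖P r ω‖ ∂Q := integral_nonneg fun ω => norm_nonneg _
      rw [Real.norm_eq_abs, abs_of_nonneg hnn]
      exact hb2
  have hIntI : ∀ t ∈ Icc (0:ℝ) T, Integrable (fun ω => I' t ω) Q := by
    intro t ht
    exact (hIntP t ht).integral_prod_right
  -- strong measurability of the integral term w.r.t. ℱ t
  have hSM_I : ∀ t : ℝ, StronglyMeasurable[ℱ t] (fun ω => I' t ω) := by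
    intro t
    have hsm := Stmt13Aux.sm_min (mΩ' := ℱ t) ν (fun φ hφ => hprog φ hφ t) Ψt' cΨt' C₂ bΨt'
    have h2 := @MeasureTheory.StronglyMeasurable.integral_prod_left' ℝ Ω ℝ
      Real.measurableSpace (ℱ t) (volume.restrict (Ioc (0:ℝ) t)) inferInstance
      inferInstance inferInstance _ hsm
    have h3 : (fun ω => I' t ω) = fun ω =>
        ∫ r, pairF (Ψt' r) (ν (min r t) ω) ∂(volume.restrict (Ioc (0:ℝ) t)) := by
      funext ω
      exact (setIntegral_congr_fun measurableSet_Ioc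
        (fun r hr => by simp only [min_eq_left hr.2]; rfl)).symm
    rw [h3]
    exact h2
  -- joint measurability with frozen time s
  have smS : ∀ s : ℝ, StronglyMeasurable (fun p : ℝ × Ω => pairF (Ψt' p.1) (ν s p.2)) := by
    intro s
    refine Stmt13Aux.sm_pair (fun ω => ν s ω) ?_ Ψt' cΨt' C₂ bΨt'
    intro φ hφ
    exact (IsStronglyProgressive.stronglyAdapted (hprog φ hφ) s).mono (ℱ.le s)
  -- time-derivative identity
  have hder' : ∀ x ∈ Icc (0:ℝ) T, ∀ u ∈ Icc (0:ℝ) T,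
      HasDerivWithinAt (fun τ => Ψ' τ x) (Ψt' u x) (Icc (0:ℝ) T) u := by
    intro x hx u hu
    have h2 : Ψt' u x = Ψt u x := Stmt13Aux.reg2_eq hu hx
    rw [h2]
    exact (hΨt x hx u hu).congr (fun τ hτ => Stmt13Aux.reg2_eq hτ hx)
      (Stmt13Aux.reg2_eq hu hx)
  constructor
  · -- integrability and adaptedness
    intro t ht
    refine ⟨((hIA t ht).sub (hIA 0 h0T)).sub (hIntI t ht), ?_⟩
    have hSA : StronglyMeasurable[ℱ t] (fun ω => A' t ω) :=
      IsStronglyProgressive.stronglyAdapted (hprog (Ψ' t) (Stmt13Aux.cont_slice cΨ' t).measurable) t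
    have hSA0 : StronglyMeasurable[ℱ t] (fun ω => A' 0 ω) :=
      (IsStronglyProgressive.stronglyAdapted (hprog (Ψ' 0) (Stmt13Aux.cont_slice cΨ' 0).measurable) 0).mono (ℱ.mono ht.1)
    exact (hSA.sub hSA0).sub (hSM_I t)
  · -- martingale property
    intro s t hs ht hst
    have hYint : ∀ u ∈ Icc (0:ℝ) T, Integrable (fun ω => A' u ω - A' 0 ω - I' u ω) Q :=
      fun u hu => ((hIA u hu).sub (hIA 0 h0T)).sub (hIntI u hu)
    have hYsm : StronglyMeasurable[ℱ s] (fun ω => A' s ω - A' 0 ω - I' s ω) := by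
      have hSA : StronglyMeasurable[ℱ s] (fun ω => A' s ω) :=
        IsStronglyProgressive.stronglyAdapted (hprog (Ψ' s) (Stmt13Aux.cont_slice cΨ' s).measurable) s
      have hSA0 : StronglyMeasurable[ℱ s] (fun ω => A' 0 ω) :=
        (IsStronglyProgressive.stronglyAdapted (hprog (Ψ' 0) (Stmt13Aux.cont_slice cΨ' 0).measurable) 0).mono (ℱ.mono hs.1)
      exact (hSA.sub hSA0).sub (hSM_I s)
    refine (ae_eq_condExp_of_forall_setIntegral_eq (ℱ.le s) (hYint t ht)
      (fun A hA _ => (hYint s hs).integrableOn) (fun A hA _ => ?_)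
      hYsm.aestronglyMeasurable).symm
    -- main set-integral identity
    have hAm : MeasurableSet A := ℱ.le s A hA
    have expand : ∀ u, u ∈ Icc (0:ℝ) T → ∫ ω in A, (A' u ω - A' 0 ω - I' u ω) ∂Q
        = (∫ ω in A, A' u ω ∂Q) - (∫ ω in A, A' 0 ω ∂Q) - ∫ ω in A, I' u ω ∂Q := by
      intro u hu
      have hsub : Integrable (fun ω => A' u ω - A' 0 ω) Q := (hIA u hu).sub (hIA 0 h0T)
      rw [integral_sub hsub.integrableOn (hIntI u hu).integrableOn,
        integral_sub (hIA u hu).integrableOn (hIA 0 h0T).integrableOn]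
    -- martingale transfer of the A-terms
    have hMartA : ∫ ω in A, A' t ω ∂Q = ∫ ω in A, pairF (Ψ' t) (ν s ω) ∂Q :=
      hsetMart (Ψ' t) (hsliceΨ' t) s t hs ht hst A hA
    -- I-difference
    have haeII : ∀ᵐ ω ∂Q, I' t ω - I' s ω = ∫ r in Ioc s t, P r ω := by
      filter_upwards [(hIntP t ht).prod_left_ae] with ω hω
      have hω' : IntegrableOn (fun r => P r ω) (Ioc (0:ℝ) t) volume := hω
      have h1 : IntegrableOn (fun r => P r ω) (Ioc (0:ℝ) s) volume :=
        hω'.mono_set (Ioc_subset_Ioc le_rfl hst)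
      have h2 : IntegrableOn (fun r => P r ω) (Ioc s t) volume :=
        hω'.mono_set (Ioc_subset_Ioc hs.1 le_rfl)
      have hu : I' t ω = I' s ω + ∫ r in Ioc s t, P r ω := by
        rw [hI'def]
        simp only []
        rw [← Ioc_union_Ioc_eq_Ioc hs.1 hst,
          setIntegral_union (Ioc_disjoint_Ioc_of_le le_rfl) measurableSet_Ioc h1 h2]
      rw [hu]; ring
    have hIdiff : (∫ ω in A, I' t ω ∂Q) - ∫ ω in A, I' s ω ∂Q
        = ∫ ω in A, (∫ r in Ioc s t, P r ω) ∂Q := by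
      rw [← integral_sub (hIntI t ht).integrableOn (hIntI s hs).integrableOn]
      exact setIntegral_congr_ae hAm (haeII.mono fun ω hω _ => hω)
    -- Fubini swap forward
    haveI hfinIoc : IsFiniteMeasure (volume.restrict (Ioc s t)) :=
      ⟨by rw [Measure.restrict_apply_univ]; exact measure_Ioc_lt_top⟩
    have hPint_swap : Integrable (fun p : Ω × ℝ => P p.2 p.1)
        ((Q.restrict A).prod (volume.restrict (Ioc s t))) := by
      have h1 := (hIntP t ht).swap
      have h2 : (Q.restrict A).prod (volume.restrict (Ioc s t))
          = (Q.prod (volume.restrict (Ioc (0:ℝ) t))).restrict (A ×ˢ Ioc s t) := by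
        rw [← Measure.prod_restrict]
        congr 1
        rw [Measure.restrict_restrict measurableSet_Ioc,
          inter_eq_left.2 (Ioc_subset_Ioc hs.1 le_rfl)]
      rw [h2]
      exact h1.integrableOn
    have hswap1 : ∫ ω in A, (∫ r in Ioc s t, P r ω) ∂Q
        = ∫ r in Ioc s t, (∫ ω in A, P r ω ∂Q) :=
      integral_integral_swap hPint_swap
    have hswap2 : ∫ r in Ioc s t, (∫ ω in A, P r ω ∂Q)
        = ∫ r in Ioc s t, (∫ ω in A, pairF (Ψt' r) (ν s ω) ∂Q) := by
      refine setIntegral_congr_fun measurableSet_Ioc (fun r hr => ?_)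
      exact hsetMart (Ψt' r) (hsliceΨt' r) s r hs ⟨hs.1.trans hr.1.le, hr.2.trans ht.2⟩
        hr.1.le A hA
    -- Fubini swap backward
    have hP'int : Integrable (fun p : Ω × ℝ => pairF (Ψt' p.2) (ν s p.1))
        ((Q.restrict A).prod (volume.restrict (Ioc s t))) := by
      refine Integrable.mono'
        (g := fun p : Ω × ℝ => (C₂ * pairF (fun _ => (1:ℝ)) (ν s p.1)) * 1) ?_ ?_ ?_
      · exact Integrable.mul_prod (((hInt1 s hs).const_mul C₂).integrableOn)
          (integrable_const 1)
      · exact ((smS s).comp_measurable measurable_swap).aestronglyMeasurable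
      · refine Eventually.of_forall fun p => ?_
        simpa [Real.norm_eq_abs] using Stmt13Aux.pairF_abs_le (fun x _ => bΨt' p.2 x) (ν s p.1)
    have hswap3 : ∫ r in Ioc s t, (∫ ω in A, pairF (Ψt' r) (ν s ω) ∂Q)
        = ∫ ω in A, (∫ r in Ioc s t, pairF (Ψt' r) (ν s ω)) ∂Q :=
      (integral_integral_swap hP'int).symm
    -- FTC
    have hftc : ∀ ω : Ω, ∫ r in Ioc s t, pairF (Ψt' r) (ν s ω)
        = pairF (Ψ' t) (ν s ω) - pairF (Ψ' s) (ν s ω) := fun ω =>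
      Stmt13Aux.ftc_pair hT cΨ' cΨt' bΨt' hder' hs ht hst (ν s ω)
    have hig1 : IntegrableOn (fun ω => pairF (Ψ' t) (ν s ω)) A Q :=
      (((hmart (Ψ' t) (hsliceΨ' t)).1 s hs).1).integrableOn
    have hig2 : IntegrableOn (fun ω => pairF (Ψ' s) (ν s ω)) A Q :=
      (((hmart (Ψ' s) (hsliceΨ' s)).1 s hs).1).integrableOn
    have hftcInt : ∫ ω in A, (∫ r in Ioc s t, pairF (Ψt' r) (ν s ω)) ∂Q
        = (∫ ω in A, pairF (Ψ' t) (ν s ω) ∂Q) - ∫ ω in A, pairF (Ψ' s) (ν s ω) ∂Q := by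
      rw [← integral_sub hig1 hig2]
      exact integral_congr_ae (Eventually.of_forall fun ω => hftc ω)
    have hAs : (∫ ω in A, A' s ω ∂Q) = ∫ ω in A, pairF (Ψ' s) (ν s ω) ∂Q := rfl
    rw [expand s hs, expand t ht]
    have hchain : (∫ ω in A, I' t ω ∂Q) - ∫ ω in A, I' s ω ∂Q
        = (∫ ω in A, A' t ω ∂Q) - ∫ ω in A, A' s ω ∂Q := by
      rw [hIdiff, hswap1, hswap2, hswap3, hftcInt, hMartA, hAs]
    have h := hchain
    linarith [h]
end
end

section
/- Discrete-time HJM theorem (Remark 3.5): let E = {0, 1, …, T} for T ∈ ℕ, and let (μ_t)_{t∈{0,…,T}} be an adapted process with values in ℝ_{≥0}^{T+1} on a filtered probability space, with E[sup_{t} Σ_{i=0}^T μ_t(i)] < ∞. For φ : E → ℝ set ⟨φ, μ⟩ := Σ_{i=0}^T φ(i) μ(i) and φ'(i) := (φ(i) − φ(i−1)) 1_{{i > 0}}. Assume that for every φ : E → ℝ the process t ↦ ⟨φ, μ_t⟩ + Σ_{j=1}^t ⟨φ', μ_{j−1}⟩ is a martingale on {0, …, T}. Then for every function w : ℝ → ℝ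 and every 0 ≤ τ_1 < τ_2 ≤ T, the discounted future price F(t, τ_1, τ_2) := Σ_{i=0}^T 1_{(τ_1, τ_2]}(t + i) w(t + i) μ_t(i) is a martingale on {0, 1, …, τ_1}. -/
open MeasureTheory Finset

noncomputable section

/-- Discrete pairing `⟨φ, μ⟩ = Σ_{i=0}^T φ(i) μ(i)`. -/
def dpair (T : ℕ) (φ : ℕ → ℝ) (μ : ℕ → ℝ) : ℝ :=
  ∑ i ∈ Finset.range (T + 1), φ i * μ i

/-- Discrete derivative `φ'(i) = (φ(i) − φ(i−1)) 1_{i>0}`. -/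
def dderiv (φ : ℕ → ℝ) (i : ℕ) : ℝ :=
  if 0 < i then φ i - φ (i - 1) else 0

/-- A real-valued martingale on the discrete time set `{0, …, N}`. -/
def DIsMartOn {Ω : Type*} {m0 : MeasurableSpace Ω} (ℱ : MeasureTheory.Filtration ℕ m0)
    (Q : MeasureTheory.Measure Ω) (N : ℕ) (X : ℕ → Ω → ℝ) : Prop :=
  (∀ t ≤ N, MeasureTheory.Integrable (X t) Q ∧ StronglyMeasurable[ℱ t] (X t)) ∧
  ∀ s t : ℕ, s ≤ t → t ≤ N → Q[X t | ℱ s] =ᵐ[Q] X s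

/-- Auxiliary coefficient function. -/
def phiF (w : ℝ → ℝ) (τ₁ τ₂ t i : ℕ) : ℝ :=
  if τ₁ < t + i ∧ t + i ≤ τ₂ then w (t + i) else 0

lemma phiF_sub (w : ℝ → ℝ) (τ₁ τ₂ t : ℕ) (ht : t + 1 ≤ τ₁) (i : ℕ) :
    phiF w τ₁ τ₂ (t + 1) i - dderiv (phiF w τ₁ τ₂ (t + 1)) i = phiF w τ₁ τ₂ t i := by
  rcases i with _ | k
  · unfold phiF dderiv
    simp only [Nat.lt_irrefl, if_false, Nat.add_zero, sub_zero]
    rw [if_neg (fun h => by omega), if_neg (fun h => by omega)]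
  · unfold phiF dderiv
    rw [if_pos (Nat.succ_pos k)]
    simp only [Nat.add_sub_cancel]
    rw [sub_sub_cancel]
    rw [show t + 1 + k = t + (k + 1) from by omega]
    push_cast
    ring_nf

/-- **Remark 3.5 (discrete-time HJM).** If `(μ_t)` is an adapted non-negative
`ℝ^{T+1}`-valued process with `E[sup_t Σ_i μ_t(i)] < ∞` such that for every `φ`
`⟨φ, μ_t⟩ + Σ_{j=1}^t ⟨φ', μ_{j−1}⟩` is a martingale, then for every weight `w` and
`0 ≤ τ₁ < τ₂ ≤ T` the discounted future price
`F(t,τ₁,τ₂) = Σ_{i=0}^T 1_{(τ₁,τ₂]}(t+i) w(t+i) μ_t(i)` is a martingale on `{0,…,τ₁}`. -/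
theorem stmt16 (T : ℕ)
    {Ω : Type*} {m0 : MeasurableSpace Ω} (ℱ : Filtration ℕ m0)
    (Q : Measure Ω) [IsProbabilityMeasure Q]
    (μ : ℕ → Ω → ℕ → ℝ)
    (hpos : ∀ t ω i, 0 ≤ μ t ω i)
    (hadapted : ∀ t i, StronglyMeasurable[ℱ t] (fun ω => μ t ω i))
    (hsup : Integrable (fun ω => ⨆ t : Fin (T + 1), ∑ i ∈ Finset.range (T + 1), μ t ω i) Q)
    (hmart : ∀ φ : ℕ → ℝ,
      DIsMartOn ℱ Q T (fun t ω =>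
        dpair T φ (μ t ω) + ∑ j ∈ Finset.Icc 1 t, dpair T (dderiv φ) (μ (j - 1) ω)))
    (w : ℝ → ℝ) (τ₁ τ₂ : ℕ) (hτ : τ₁ < τ₂) (hτ₂ : τ₂ ≤ T) :
    DIsMartOn ℱ Q τ₁ (fun t ω =>
      ∑ i ∈ Finset.range (T + 1),
        (if τ₁ < t + i ∧ t + i ≤ τ₂ then w (t + i) else 0) * μ t ω i) := by
  classical
  have hτ₁T : τ₁ ≤ T := by omega
  -- integrability of each component
  have hint : ∀ u, u ≤ T → ∀ i, i ≤ T → Integrable (fun ω => μ u ω i) Q := by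
    intro u hu i hi
    refine hsup.mono' ((hadapted u i).mono (ℱ.le u)).aestronglyMeasurable ?_
    filter_upwards with ω
    rw [Real.norm_eq_abs, abs_of_nonneg (hpos u ω i)]
    calc μ u ω i ≤ ∑ j ∈ Finset.range (T + 1), μ u ω j :=
          Finset.single_le_sum (fun j _ => hpos u ω j) (Finset.mem_range.mpr (by omega))
      _ ≤ ⨆ t : Fin (T + 1), ∑ j ∈ Finset.range (T + 1), μ t ω j :=
          le_ciSup (f := fun t : Fin (T + 1) => ∑ j ∈ Finset.range (T + 1), μ (↑t) ω j)
            (Set.Finite.bddAbove (Set.finite_range _)) (⟨u, by omega⟩ : Fin (T + 1))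
  -- integrability and measurability of dpair processes
  have hdint : ∀ (ψ : ℕ → ℝ) (u : ℕ), u ≤ T → Integrable (fun ω => dpair T ψ (μ u ω)) Q := by
    intro ψ u hu
    unfold dpair
    exact integrable_finset_sum _ (fun i hi =>
      (hint u hu i (Nat.lt_succ_iff.mp (Finset.mem_range.mp hi))).const_mul (ψ i))
  have hdmeas : ∀ (ψ : ℕ → ℝ) (u t : ℕ), u ≤ t →
      StronglyMeasurable[ℱ t] (fun ω => dpair T ψ (μ u ω)) := by
    intro ψ u t hut
    unfold dpair
    exact Finset.stronglyMeasurable_fun_sum _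
      (fun i _ => stronglyMeasurable_const.mul ((hadapted u i).mono (ℱ.mono hut)))
  -- one-step martingale property below τ₁
  have hstep : ∀ t : ℕ, t + 1 ≤ τ₁ →
      Q[(fun ω => dpair T (phiF w τ₁ τ₂ (t + 1)) (μ (t + 1) ω)) | ℱ t]
        =ᵐ[Q] (fun ω => dpair T (phiF w τ₁ τ₂ t) (μ t ω)) := by
    intro t ht
    set φ : ℕ → ℝ := phiF w τ₁ τ₂ (t + 1) with hφ
    set S : Ω → ℝ := fun ω => ∑ j ∈ Finset.Icc 1 (t + 1), dpair T (dderiv φ) (μ (j - 1) ω)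
      with hS
    have ht1T : t + 1 ≤ T := by omega
    have hSmeas : StronglyMeasurable[ℱ t] S := by
      refine Finset.stronglyMeasurable_fun_sum _ (fun j hj => hdmeas _ (j - 1) t ?_)
      simp only [Finset.mem_Icc] at hj; omega
    have hSint : Integrable S Q := by
      refine integrable_finset_sum _ (fun j hj => hdint _ (j - 1) ?_)
      simp only [Finset.mem_Icc] at hj; omega
    have hM := (hmart φ).2 t (t + 1) (Nat.le_succ t) ht1T
    have hMint := ((hmart φ).1 (t + 1) ht1T).1
    -- rewrite the conditioned function as M_{t+1} - S
    have hfeq : (fun ω => dpair T φ (μ (t + 1) ω))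
        = (fun t ω => dpair T φ (μ t ω)
            + ∑ j ∈ Finset.Icc 1 t, dpair T (dderiv φ) (μ (j - 1) ω)) (t + 1) - S := by
      funext ω; simp [hS]
    rw [hfeq]
    have hsub := condExp_sub (μ := Q) (m := ℱ t) hMint hSint
    refine hsub.trans ?_
    have hScond : Q[S | ℱ t] = S := condExp_of_stronglyMeasurable (ℱ.le t) hSmeas hSint
    rw [hScond]
    have h2 : Q[(fun t ω => dpair T φ (μ t ω)
          + ∑ j ∈ Finset.Icc 1 t, dpair T (dderiv φ) (μ (j - 1) ω)) (t + 1) | ℱ t] - S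
        =ᵐ[Q] fun ω => (dpair T φ (μ t ω)
          + ∑ j ∈ Finset.Icc 1 t, dpair T (dderiv φ) (μ (j - 1) ω)) - S ω := by
      filter_upwards [hM] with ω hω
      simp only [Pi.sub_apply]
      rw [hω]
    refine h2.trans (Filter.Eventually.of_forall fun ω => ?_)
    beta_reduce
    have hIcc : S ω
        = (∑ j ∈ Finset.Icc 1 t, dpair T (dderiv φ) (μ (j - 1) ω))
          + dpair T (dderiv φ) (μ t ω) := by
      simp only [hS]
      rw [Finset.sum_Icc_succ_top (by omega : 1 ≤ t + 1)]
      simp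
    rw [hIcc]
    have hkey : dpair T φ (μ t ω) - dpair T (dderiv φ) (μ t ω)
        = dpair T (phiF w τ₁ τ₂ t) (μ t ω) := by
      unfold dpair
      rw [← Finset.sum_sub_distrib]
      refine Finset.sum_congr rfl (fun i _ => ?_)
      rw [← sub_mul, hφ, phiF_sub w τ₁ τ₂ t ht i]
    linarith [hkey]
  constructor
  · intro t ht
    refine ⟨?_, ?_⟩
    · show Integrable (fun ω => dpair T (phiF w τ₁ τ₂ t) (μ t ω)) Q
      exact hdint _ t (by omega)
    · show StronglyMeasurable[ℱ t] (fun ω => dpair T (phiF w τ₁ τ₂ t) (μ t ω))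
      exact hdmeas _ t t le_rfl
  · intro s t hst htτ
    show Q[(fun ω => dpair T (phiF w τ₁ τ₂ t) (μ t ω)) | ℱ s]
        =ᵐ[Q] (fun ω => dpair T (phiF w τ₁ τ₂ s) (μ s ω))
    revert htτ
    induction t, hst using Nat.le_induction with
    | base =>
      intro hsτ
      rw [condExp_of_stronglyMeasurable (ℱ.le s) (hdmeas _ s s le_rfl) (hdint _ s (by omega))]
    | succ t hst ih =>
      intro ht1
      have htow := condExp_condExp_of_le (μ := Q)
        (f := fun ω => dpair T (phiF w τ₁ τ₂ (t + 1)) (μ (t + 1) ω))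
        (ℱ.mono hst) (ℱ.le t)
      refine htow.symm.trans ?_
      refine (condExp_congr_ae (hstep t ht1)).trans ?_
      exact ih (by omega)
end
end

section
/- Discrete summation-by-parts martingale lemma (from the proof of Remark 3.5): let E = {0, 1, …, T}, (μ_t)_{t∈{0,…,T}} an adapted ℝ_{≥0}^{T+1}-valued process with E[sup_t Σ_{i=0}^T μ_t(i)] < ∞, and suppose that for every φ : E → ℝ the process t ↦ ⟨φ, μ_t⟩ + Σ_{j=1}^t ⟨φ', μ_{j−1}⟩ is a martingale, where ⟨φ, μ⟩ := Σ_{i=0}^T φ(i) μ(i) and φ'(i) := (φ(i) − φ(i−1)) 1_{{i>0}}. Then for all functions ψ, φ : {0, …, T} → ℝ, with the convention φ(−1) := φ(0), the process t ↦ ψ(t) ⟨φ, μ_t⟩ + Σ_{j=1}^t Σ_{i=0}^T ( ψ(j−1) φ(i) − ψ(j) φ(i−1) ) μ_{j−1}(i) is a martingale on {0, …, T}. -/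
open MeasureTheory Finset

noncomputable section

/-- A (deterministic, hence predictable) transform of a discrete martingale is a martingale. -/
lemma mart_transform {Ω : Type*} {m0 : MeasurableSpace Ω} (ℱ : Filtration ℕ m0)
    (Q : Measure Ω) [IsFiniteMeasure Q] (N : ℕ) (X : ℕ → Ω → ℝ) (ψ : ℕ → ℝ)
    (hX : DIsMartOn ℱ Q N X) :
    DIsMartOn ℱ Q N
      (fun t ω => ψ 0 * X 0 ω + ∑ j ∈ Finset.Icc 1 t, ψ j * (X j ω - X (j - 1) ω)) := by
  obtain ⟨hXint, hXmart⟩ := hX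
  have hint : ∀ t ≤ N, Integrable
      (fun ω => ψ 0 * X 0 ω + ∑ j ∈ Finset.Icc 1 t, ψ j * (X j ω - X (j - 1) ω)) Q := by
    intro t ht
    apply Integrable.add
    · exact ((hXint 0 (Nat.zero_le N)).1).const_mul _
    · apply integrable_finset_sum
      intro j hj
      have hjN : j ≤ N := le_trans (Finset.mem_Icc.mp hj).2 ht
      exact ((hXint j hjN).1.sub (hXint (j - 1) (le_trans (Nat.sub_le j 1) hjN)).1).const_mul _
  have hmeas : ∀ t ≤ N, StronglyMeasurable[ℱ t]
      (fun ω => ψ 0 * X 0 ω + ∑ j ∈ Finset.Icc 1 t, ψ j * (X j ω - X (j - 1) ω)) := by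
    intro t ht
    apply StronglyMeasurable.add
    · exact ((hXint 0 (Nat.zero_le N)).2.mono (ℱ.mono (Nat.zero_le t))).const_mul _
    · apply Finset.stronglyMeasurable_fun_sum
      intro j hj
      have hjt : j ≤ t := (Finset.mem_Icc.mp hj).2
      have hjN : j ≤ N := le_trans hjt ht
      exact (((hXint j hjN).2.mono (ℱ.mono hjt)).sub
        ((hXint (j - 1) (le_trans (Nat.sub_le j 1) hjN)).2.mono
          (ℱ.mono (le_trans (Nat.sub_le j 1) hjt)))).const_mul _
  refine ⟨fun t ht => ⟨hint t ht, hmeas t ht⟩, ?_⟩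
  intro s t hst
  induction t, hst using Nat.le_induction with
  | base =>
    intro hsN
    dsimp only
    rw [condExp_of_stronglyMeasurable (ℱ.le s) (hmeas s hsN) (hint s hsN)]
  | succ t hst ih =>
    intro hT1
    dsimp only at *
    have hTt : t ≤ N := le_trans (Nat.le_succ t) hT1
    have ihs := ih hTt
    have hZrw : (fun ω => ψ 0 * X 0 ω +
          ∑ j ∈ Finset.Icc 1 (t + 1), ψ j * (X j ω - X (j - 1) ω))
        = (fun ω => ψ 0 * X 0 ω + ∑ j ∈ Finset.Icc 1 t, ψ j * (X j ω - X (j - 1) ω))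
          + (ψ (t + 1)) • (X (t + 1) - X t) := by
      funext ω
      simp [Finset.sum_Icc_succ_top (Nat.le_add_left 1 t)]
      ring
    rw [hZrw]
    have hD : Integrable ((ψ (t + 1)) • (X (t + 1) - X t)) Q :=
      (((hXint (t + 1) hT1).1.sub (hXint t hTt).1)).smul _
    have h1 := condExp_add (μ := Q) (m := ℱ s) (hint t hTt) hD
    have h2 := condExp_smul (μ := Q) (m := ℱ s) (ψ (t + 1)) (X (t + 1) - X t)
    have h3 := condExp_sub (μ := Q) (m := ℱ s) (hXint (t + 1) hT1).1 (hXint t hTt).1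
    have h4 := hXmart s (t + 1) (le_trans hst (Nat.le_succ t)) hT1
    have h5 := hXmart s t hst hTt
    filter_upwards [h1, h2, h3, h4, h5, ihs] with ω e1 e2 e3 e4 e5 e6
    simp only [Pi.add_apply, Pi.smul_apply, Pi.sub_apply, smul_eq_mul] at *
    rw [e1, e2, e3, e4, e5, e6]
    ring

/-- **Discrete summation-by-parts martingale lemma (proof of Remark 3.5).** Under the
discrete HJM condition, for all `ψ, φ : {0,…,T} → ℝ` (with the convention
`φ(−1) := φ(0)`, realised here by truncated subtraction on `ℕ`), the process
`ψ(t)⟨φ, μ_t⟩ + Σ_{j=1}^t Σ_{i=0}^T (ψ(j−1)φ(i) − ψ(j)φ(i−1)) μ_{j−1}(i)`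
is a martingale on `{0,…,T}`. -/
theorem stmt17 (T : ℕ)
    {Ω : Type*} {m0 : MeasurableSpace Ω} (ℱ : Filtration ℕ m0)
    (Q : Measure Ω) [IsProbabilityMeasure Q]
    (μ : ℕ → Ω → ℕ → ℝ)
    (hpos : ∀ t ω i, 0 ≤ μ t ω i)
    (hadapted : ∀ t i, StronglyMeasurable[ℱ t] (fun ω => μ t ω i))
    (hsup : Integrable (fun ω => ⨆ t : Fin (T + 1), ∑ i ∈ Finset.range (T + 1), μ t ω i) Q)
    (hmart : ∀ φ : ℕ → ℝ,
      DIsMartOn ℱ Q T (fun t ω =>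
        dpair T φ (μ t ω) + ∑ j ∈ Finset.Icc 1 t, dpair T (dderiv φ) (μ (j - 1) ω)))
    (ψ φ : ℕ → ℝ) :
    DIsMartOn ℱ Q T (fun t ω =>
      ψ t * dpair T φ (μ t ω)
        + ∑ j ∈ Finset.Icc 1 t, ∑ i ∈ Finset.range (T + 1),
            (ψ (j - 1) * φ i - ψ j * φ (i - 1)) * μ (j - 1) ω i) := by
  classical
  set X : ℕ → Ω → ℝ := fun t ω =>
    dpair T φ (μ t ω) + ∑ j ∈ Finset.Icc 1 t, dpair T (dderiv φ) (μ (j - 1) ω) with hXdef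
  have inc : ∀ n ω, X (n + 1) ω - X n ω
      = dpair T φ (μ (n + 1) ω) - dpair T φ (μ n ω) + dpair T (dderiv φ) (μ n ω) := by
    intro n ω
    simp only [hXdef, Finset.sum_Icc_succ_top (Nat.le_add_left 1 n), Nat.add_sub_cancel]
    ring
  have inc2 : ∀ n ω,
      ∑ i ∈ Finset.range (T + 1), (ψ n * φ i - ψ (n + 1) * φ (i - 1)) * μ n ω i
      = ψ (n + 1) * (X (n + 1) ω - X n ω)
        - (ψ (n + 1) * dpair T φ (μ (n + 1) ω) - ψ n * dpair T φ (μ n ω)) := by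
    intro n ω
    rw [inc]
    have hterm : ∀ i ∈ Finset.range (T + 1),
        (ψ n * φ i - ψ (n + 1) * φ (i - 1)) * μ n ω i
        = ψ (n + 1) * (dderiv φ i * μ n ω i) - ψ (n + 1) * (φ i * μ n ω i)
          + ψ n * (φ i * μ n ω i) := by
      intro i _
      unfold dderiv
      rcases Nat.eq_zero_or_pos i with h | h
      · subst h; simp; ring
      · rw [if_pos h]; ring
    rw [Finset.sum_congr rfl hterm]
    simp only [dpair, Finset.sum_add_distrib, Finset.sum_sub_distrib, ← Finset.mul_sum]
    ring
  have key : ∀ t ω,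
      ψ t * dpair T φ (μ t ω)
        + ∑ j ∈ Finset.Icc 1 t, ∑ i ∈ Finset.range (T + 1),
            (ψ (j - 1) * φ i - ψ j * φ (i - 1)) * μ (j - 1) ω i
      = ψ 0 * X 0 ω + ∑ j ∈ Finset.Icc 1 t, ψ j * (X j ω - X (j - 1) ω) := by
    intro t ω
    induction t with
    | zero => simp [hXdef]
    | succ n ih =>
      rw [Finset.sum_Icc_succ_top (Nat.le_add_left 1 n),
        Finset.sum_Icc_succ_top (Nat.le_add_left 1 n)]
      have h2 := inc2 n ω
      simp only [Nat.add_sub_cancel] at *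
      linarith [ih, h2]
  have hfun : (fun t ω =>
      ψ t * dpair T φ (μ t ω)
        + ∑ j ∈ Finset.Icc 1 t, ∑ i ∈ Finset.range (T + 1),
            (ψ (j - 1) * φ i - ψ j * φ (i - 1)) * μ (j - 1) ω i)
      = fun t ω => ψ 0 * X 0 ω + ∑ j ∈ Finset.Icc 1 t, ψ j * (X j ω - X (j - 1) ω) :=
    funext fun t => funext fun ω => key t ω
  rw [hfun]
  exact mart_transform ℱ Q T X ψ (hmart φ)
end
end
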